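/- arXiv:1812.03720 — 7 statements merged into one kernel-verified Lean document; each statement's English description precedes it below -/
import Mathlib

section
/- Let p be a prime number and let a, b ≥ 2 be coprime integers with p not dividing a·b. Then there exist integers j with 1 ≤ j ≤ a−1 and r with 1 ≤ r ≤ b−1 such that for every d ∈ ℕ there exists N ∈ ℕ with ν_p( ∏_{n=0}^{N} (n·b+r)/(n·a·b + (r·a + j·b + a·b)) ) ≤ −d, where the product is taken in ℚ. -/
open Finset

private lemma count_res_le (q M : ℕ) (hq : 0 < q) :
    ((Finset.range M).filter (fun n => n % q = M % q)).card ≤ M / q := by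
  rw [← Finset.card_range (M / q)]
  apply Finset.card_le_card_of_injOn (fun n => n / q)
  · intro n hn
    simp only [Finset.mem_coe, Finset.mem_filter, Finset.mem_range] at hn
    simp only [Finset.mem_coe, Finset.mem_range]
    have h3 : q * (n / q) + n % q < q * (M / q) + M % q := by
      rw [Nat.div_add_mod, Nat.div_add_mod]; exact hn.1
    rw [hn.2] at h3
    exact Nat.lt_of_mul_lt_mul_left (Nat.lt_of_add_lt_add_right h3)
  · intro x hx y hy hxy
    simp only [Finset.coe_filter, Set.mem_setOf_eq, Finset.mem_range] at hx hy
    simp only at hxy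
    calc x = q * (x / q) + x % q := (Nat.div_add_mod x q).symm
      _ = q * (y / q) + y % q := by rw [hxy, hx.2, hy.2]
      _ = y := Nat.div_add_mod y q

private lemma count_res_ge (q M t : ℕ) (hq : 0 < q) (ht : t < q) :
    M / q + (if t < M % q then 1 else 0) ≤
      ((Finset.range M).filter (fun n => n % q = t)).card := by
  classical
  have hinj : Function.Injective (fun i => q * i + t) := by
    intro x y h
    simp only at h
    exact Nat.eq_of_mul_eq_mul_left hq (Nat.add_right_cancel h)
  have hMq : q * (M / q) ≤ M := by
    conv_rhs => rw [← Nat.div_add_mod M q]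
    exact Nat.le_add_right _ _
  have hsub : (Finset.range (M / q + (if t < M % q then 1 else 0))).image (fun i => q * i + t) ⊆
      (Finset.range M).filter (fun n => n % q = t) := by
    intro x hx
    simp only [Finset.mem_image, Finset.mem_range] at hx
    obtain ⟨i, hi, rfl⟩ := hx
    simp only [Finset.mem_filter, Finset.mem_range]
    refine ⟨?_, by rw [Nat.mul_add_mod]; exact Nat.mod_eq_of_lt ht⟩
    have hcommon : ∀ i' : ℕ, i' < M / q → q * i' + t < M := by
      intro i' hi'
      have h1 : q * (i' + 1) ≤ q * (M / q) := Nat.mul_le_mul_left q hi'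
      have h2 : q * i' + t < q * (i' + 1) := by
        rw [Nat.mul_succ]; exact Nat.add_lt_add_left ht _
      exact lt_of_lt_of_le h2 (le_trans h1 hMq)
    by_cases hc : t < M % q
    · rw [if_pos hc] at hi
      rcases Nat.lt_or_ge i (M / q) with h | h
      · exact hcommon i h
      · have hieq : i = M / q := by omega
        subst hieq
        calc q * (M / q) + t < q * (M / q) + M % q := Nat.add_lt_add_left hc _
          _ = M := Nat.div_add_mod M q
    · rw [if_neg hc] at hi
      exact hcommon i (by omega)
  calc M / q + (if t < M % q then 1 else 0)
      = (Finset.range (M / q + (if t < M % q then 1 else 0))).card := (Finset.card_range _).symm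
    _ = ((Finset.range (M / q + (if t < M % q then 1 else 0))).image (fun i => q * i + t)).card :=
        (Finset.card_image_of_injective _ hinj).symm
    _ ≤ _ := Finset.card_le_card hsub

private lemma val_eq_count (p : ℕ) (hp : p.Prime) (x M : ℕ) (hx : 0 < x) (hxM : x < p ^ M) :
    padicValNat p x = ((Finset.range M).filter (fun k => p ^ (k + 1) ∣ x)).card := by
  haveI : Fact p.Prime := ⟨hp⟩
  have hvlt : padicValNat p x < M := by
    by_contra h
    push_neg at h
    have h1 : p ^ M ∣ x := dvd_trans (pow_dvd_pow p h) pow_padicValNat_dvd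
    exact absurd (Nat.le_of_dvd hx h1) (by omega)
  have heq : ((Finset.range M).filter (fun k => p ^ (k + 1) ∣ x)) =
      Finset.range (padicValNat p x) := by
    ext k
    simp only [Finset.mem_filter, Finset.mem_range]
    rw [padicValNat_dvd_iff_le hx.ne']
    omega
  rw [heq, Finset.card_range]

private lemma dvd_iff_mod (q m s t : ℕ) (hco : Nat.Coprime q m)
    (ht : q ∣ m * t + s) (n : ℕ) : q ∣ m * n + s ↔ n % q = t % q := by
  constructor
  · intro h
    have h1 : m * n + s ≡ m * t + s [MOD q] :=
      (Nat.modEq_zero_iff_dvd.mpr h).trans (Nat.modEq_zero_iff_dvd.mpr ht).symm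
    have h2 : m * n ≡ m * t [MOD q] := Nat.ModEq.add_right_cancel' s h1
    exact Nat.ModEq.cancel_left_of_coprime hco h2
  · intro h
    have h2 : m * n + s ≡ m * t + s [MOD q] := (Nat.ModEq.mul_left m h).add_right s
    exact Nat.modEq_zero_iff_dvd.mp (h2.trans (Nat.modEq_zero_iff_dvd.mpr ht))

private lemma uniq_res (q m s x y : ℕ) (hq : 0 < q) (hco : Nat.Coprime q m)
    (hx : x < q) (hy : y < q) (hdx : q ∣ m * x + s) (hdy : q ∣ m * y + s) : x = y := by
  have h := (dvd_iff_mod q m s y hco hdy x).mp hdx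
  rwa [Nat.mod_eq_of_lt hx, Nat.mod_eq_of_lt hy] at h

private lemma padicValRat_prod (p : ℕ) [Fact p.Prime] (s : Finset ℕ) (f : ℕ → ℚ)
    (hf : ∀ i ∈ s, f i ≠ 0) :
    padicValRat p (∏ i ∈ s, f i) = ∑ i ∈ s, padicValRat p (f i) := by
  classical
  induction s using Finset.induction_on with
  | empty => simp
  | @insert a s' h ih =>
      rw [Finset.prod_insert h, Finset.sum_insert h,
        padicValRat.mul (hf a (Finset.mem_insert_self a s'))
          (Finset.prod_ne_zero_iff.mpr fun i hi => hf i (Finset.mem_insert_of_mem hi)),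
        ih fun i hi => hf i (Finset.mem_insert_of_mem hi)]

/-- For a prime `p` and coprime integers `a, b ≥ 2` with `p ∤ a·b`, there
exist `1 ≤ j ≤ a−1` and `1 ≤ r ≤ b−1` such that for every `d ∈ ℕ` there is `N ∈ ℕ` with
`ν_p(∏_{n=0}^{N} (n·b+r)/(n·a·b + (r·a + j·b + a·b))) ≤ −d`. -/
theorem stmt0 (p : ℕ) (hp : p.Prime) (a b : ℕ) (ha : 2 ≤ a) (hb : 2 ≤ b)
    (hab : Nat.Coprime a b) (hpab : ¬ p ∣ a * b) :
    ∃ j r : ℕ, 1 ≤ j ∧ j ≤ a - 1 ∧ 1 ≤ r ∧ r ≤ b - 1 ∧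
      ∀ d : ℕ, ∃ N : ℕ,
        padicValRat p (∏ n ∈ Finset.range (N + 1),
          ((n * b + r : ℚ) / (n * a * b + (r * a + j * b + a * b)))) ≤ -(d : ℤ) := by
  classical
  haveI : Fact p.Prime := ⟨hp⟩
  have hp2 : 2 ≤ p := hp.two_le
  have hab0 : 0 < a * b := by positivity
  have hcop : Nat.Coprime p (a * b) := (Nat.Prime.coprime_iff_not_dvd hp).mpr hpab
  have hcopb : Nat.Coprime b p :=
    Nat.Coprime.coprime_dvd_left (dvd_mul_left b a) hcop.symm
  have hkey : a + b + 1 ≤ a * b := by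
    have hne : ¬(a = 2 ∧ b = 2) := by
      rintro ⟨rfl, rfl⟩
      simp [Nat.Coprime] at hab
    rcases Nat.lt_or_ge a 3 with h3 | h3
    · have hA : a = 2 := by omega
      subst hA
      have hb3 : 3 ≤ b := by omega
      omega
    · have h1 : 3 * b ≤ a * b := Nat.mul_le_mul_right b h3
      have h2 : a * 2 ≤ a * b := Nat.mul_le_mul_left a hb
      omega
  set L := (a * b).totient with hLdef
  have hL1 : 0 < L := Nat.totient_pos.mpr hab0
  have heuler : p ^ L ≡ 1 [MOD a * b] := Nat.ModEq.pow_totient hcop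
  set m0 := 2 * (a * b) + 2 with hm0def
  have hmodpow : ∀ m : ℕ, p ^ (m * L) ≡ 1 [MOD a * b] := by
    intro m
    have h := heuler.pow m
    rw [← pow_mul, one_pow] at h
    rwa [Nat.mul_comm L m] at h
  have hsize : ∀ e : ℕ, m0 ≤ e → 4 * (a * b) + 4 ≤ p ^ e := by
    intro e he
    have t1 : 2 * (a * b) < 2 ^ (2 * (a * b)) := Nat.lt_two_pow_self
    have t2 : 2 ^ m0 = 2 ^ (2 * (a * b)) * 4 := by rw [hm0def, pow_add]; norm_num
    have t3 : 2 ^ m0 ≤ 2 ^ e := Nat.pow_le_pow_right (by norm_num) he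
    have t4 : 2 ^ e ≤ p ^ e := Nat.pow_le_pow_left hp2 e
    omega
  have hvex : ∀ m : ℕ, m0 ≤ m → ∃ v : ℕ, a * b * v + 1 = p ^ (m * L) ∧ 2 ≤ v := by
    intro m hm
    have h1 : p ^ (m * L) ≡ 1 [MOD a * b] := hmodpow m
    have hq1 : 1 ≤ p ^ (m * L) := Nat.one_le_pow _ _ (by omega)
    have hdvd : a * b ∣ p ^ (m * L) - 1 := (Nat.modEq_iff_dvd' hq1).mp h1.symm
    obtain ⟨v, hveq0⟩ := hdvd
    have hveq : a * b * v + 1 = p ^ (m * L) := by omega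
    have hbig : 4 * (a * b) + 4 ≤ p ^ (m * L) :=
      hsize (m * L) (le_trans hm (Nat.le_mul_of_pos_right m hL1))
    refine ⟨v, hveq, ?_⟩
    by_contra hlt
    push_neg at hlt
    have h2 : a * b * v ≤ a * b * 1 := Nat.mul_le_mul_left _ (by omega)
    have h3 : a * b * 1 = a * b := by ring
    omega
  refine ⟨a - 1, b - 1, by omega, le_rfl, by omega, le_rfl, ?_⟩
  intro d
  obtain ⟨u, hu, hu2⟩ := hvex (m0 + d) (by omega)
  set K := (m0 + d) * L with hKdef
  set r := b - 1 with hrdef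
  set j := a - 1 with hjdef
  have hr1 : r + 1 = b := by omega
  have hj1 : j + 1 = a := by omega
  obtain ⟨g, hg1, hg2⟩ : ∃ g : ℕ, a * b = g + a + b ∧ 1 ≤ g :=
    ⟨a * b - a - b, by omega, by omega⟩
  set c := r * a + j * b + a * b with hcdef
  have hra : r * a = g + b := by
    have h2 : r * a + a = a * b := by
      calc r * a + a = (r + 1) * a := by ring
        _ = a * b := by rw [hr1]; ring
    omega
  have hjb : j * b = g + a := by
    have h2 : j * b + b = a * b := by
      calc j * b + b = (j + 1) * b := by ring
        _ = a * b := by rw [hj1]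
    omega
  have hc2 : c = g + 2 * (a * b) := by rw [hcdef, hra, hjb]; omega
  set A := r * a * u with hAdef
  have hA1 : 1 ≤ A := by
    have h1 : 1 * 1 * 1 ≤ r * a * u := Nat.mul_le_mul (Nat.mul_le_mul (by omega) (by omega)) (by omega)
    omega
  obtain ⟨β, hβ⟩ : ∃ β : ℕ, β + 2 = g * u := by
    refine ⟨g * u - 2, ?_⟩
    have h1 : 1 * 2 ≤ g * u := Nat.mul_le_mul hg2 hu2
    omega
  have I1 : b * A + r = r * p ^ K := by
    calc b * A + r = r * (a * b * u) + r := by rw [hAdef]; ring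
      _ = r * (a * b * u + 1) := by ring
      _ = r * p ^ K := by rw [hu]
  have I2 : a * b * β + c = g * p ^ K := by
    calc a * b * β + c = a * b * β + (g + 2 * (a * b)) := by rw [hc2]
      _ = a * b * (β + 2) + g := by ring
      _ = a * b * (g * u) + g := by rw [hβ]
      _ = g * (a * b * u + 1) := by ring
      _ = g * p ^ K := by rw [hu]
  have hQ1 : 1 ≤ p ^ K := by omega
  have hAQ : A < p ^ K := by
    have h2 : r * p ^ K < b * p ^ K := mul_lt_mul_of_pos_right (by omega) (by omega)
    have h1 : b * A < b * p ^ K := by omega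
    exact Nat.lt_of_mul_lt_mul_left h1
  have hgab : g < a * b := by omega
  have hβQ : β < p ^ K := by
    have h2 : g * p ^ K < a * b * p ^ K := mul_lt_mul_of_pos_right hgab (by omega)
    have h1 : a * b * β < a * b * p ^ K := by omega
    exact Nat.lt_of_mul_lt_mul_left h1
  have hc1 : 1 ≤ c := by omega
  refine ⟨A - 1, ?_⟩
  have hN1 : A - 1 + 1 = A := by omega
  rw [hN1]
  -- rewrite the product into ℕ casts
  have hprodeq : (∏ n ∈ Finset.range A,
      ((n * b + r : ℚ) / (n * a * b + (r * a + j * b + a * b)))) =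
      ∏ n ∈ Finset.range A, (((n * b + r : ℕ) : ℚ) / ((n * (a * b) + c : ℕ) : ℚ)) := by
    refine Finset.prod_congr rfl fun n _ => ?_
    rw [hcdef]
    push_cast
    ring
  rw [hprodeq]
  have hterm_ne : ∀ n ∈ Finset.range A,
      (((n * b + r : ℕ) : ℚ) / ((n * (a * b) + c : ℕ) : ℚ)) ≠ 0 := by
    intro n _
    apply div_ne_zero
    · exact Nat.cast_ne_zero.mpr (by omega)
    · exact Nat.cast_ne_zero.mpr (by omega)
  rw [padicValRat_prod p (Finset.range A) _ hterm_ne]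
  have hval : ∀ n ∈ Finset.range A,
      padicValRat p (((n * b + r : ℕ) : ℚ) / ((n * (a * b) + c : ℕ) : ℚ)) =
        (padicValNat p (n * b + r) : ℤ) - (padicValNat p (n * (a * b) + c) : ℤ) := by
    intro n _
    rw [padicValRat.div (Nat.cast_ne_zero.mpr (by omega)) (Nat.cast_ne_zero.mpr (by omega)),
      padicValRat.of_nat, padicValRat.of_nat]
  rw [Finset.sum_congr rfl hval, Finset.sum_sub_distrib]
  -- now a ℕ statement suffices
  set M := K + m0 with hMdef
  suffices key : (∑ n ∈ Finset.range A, padicValNat p (n * b + r)) + d ≤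
      (∑ n ∈ Finset.range A, padicValNat p (n * (a * b) + c)) by
    have e1 : (∑ n ∈ Finset.range A, (padicValNat p (n * b + r) : ℤ)) =
        ((∑ n ∈ Finset.range A, padicValNat p (n * b + r) : ℕ) : ℤ) := by push_cast; ring
    have e2 : (∑ n ∈ Finset.range A, (padicValNat p (n * (a * b) + c) : ℤ)) =
        ((∑ n ∈ Finset.range A, padicValNat p (n * (a * b) + c) : ℕ) : ℤ) := by push_cast; ring
    rw [e1, e2]
    omega
  -- size bounds for terms
  have hpM : p ^ m0 * p ^ K = p ^ M := by rw [← pow_add, hMdef]; ring_nf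
  have hpm0big : 4 * (a * b) + 4 ≤ p ^ m0 := hsize m0 le_rfl
  have hUbound : ∀ n < A, n * b + r < p ^ M := by
    intro n hn
    have h2 : n * b ≤ (A - 1) * b := Nat.mul_le_mul_right b (by omega)
    have h3 : (A - 1) * b + b = A * b := by
      calc (A - 1) * b + b = (A - 1 + 1) * b := by ring
        _ = A * b := by rw [hN1]
    have h4 : A * b = b * A := Nat.mul_comm A b
    have h5 : r * p ^ K ≤ b * p ^ K := Nat.mul_le_mul_right _ (by omega)
    have h6 : b * p ^ K ≤ p ^ m0 * p ^ K := Nat.mul_le_mul_right _ (by omega)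
    omega
  have hWbound : ∀ n < A, n * (a * b) + c < p ^ M := by
    intro n hn
    have h2 : n * (a * b) < A * (a * b) := mul_lt_mul_of_pos_right hn hab0
    have h3 : A * (a * b) ≤ p ^ K * (a * b) := Nat.mul_le_mul_right _ (le_of_lt hAQ)
    have h4 : p ^ K * (a * b) = a * b * p ^ K := by ring
    have h5 : (4 * (a * b) + 4) * p ^ K ≤ p ^ m0 * p ^ K := Nat.mul_le_mul_right _ hpm0big
    have h6 : (4 * (a * b) + 4) * p ^ K = 4 * (a * b * p ^ K) + 4 * p ^ K := by ring
    have h7 : a * b * 1 ≤ a * b * p ^ K := Nat.mul_le_mul_left _ hQ1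
    have h8 : a * b * 1 = a * b := by ring
    omega
  -- valuations as counts
  have hSUeq : (∑ n ∈ Finset.range A, padicValNat p (n * b + r)) =
      ∑ k ∈ Finset.range M, ((Finset.range A).filter (fun n => p ^ (k + 1) ∣ n * b + r)).card := by
    calc (∑ n ∈ Finset.range A, padicValNat p (n * b + r))
        = ∑ n ∈ Finset.range A,
            ((Finset.range M).filter (fun k => p ^ (k + 1) ∣ n * b + r)).card := by
          refine Finset.sum_congr rfl fun n hn => ?_
          exact val_eq_count p hp _ M (by omega) (hUbound n (Finset.mem_range.mp hn))
      _ = ∑ n ∈ Finset.range A, ∑ k ∈ Finset.range M,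
            (if p ^ (k + 1) ∣ n * b + r then 1 else 0) := by
          refine Finset.sum_congr rfl fun n _ => ?_
          rw [Finset.card_filter]
      _ = ∑ k ∈ Finset.range M, ∑ n ∈ Finset.range A,
            (if p ^ (k + 1) ∣ n * b + r then 1 else 0) := Finset.sum_comm
      _ = _ := by
          refine Finset.sum_congr rfl fun k _ => ?_
          rw [← Finset.card_filter]
  have hSWeq : (∑ n ∈ Finset.range A, padicValNat p (n * (a * b) + c)) =
      ∑ k ∈ Finset.range M,
        ((Finset.range A).filter (fun n => p ^ (k + 1) ∣ n * (a * b) + c)).card := by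
    calc (∑ n ∈ Finset.range A, padicValNat p (n * (a * b) + c))
        = ∑ n ∈ Finset.range A,
            ((Finset.range M).filter (fun k => p ^ (k + 1) ∣ n * (a * b) + c)).card := by
          refine Finset.sum_congr rfl fun n hn => ?_
          exact val_eq_count p hp _ M (by omega) (hWbound n (Finset.mem_range.mp hn))
      _ = ∑ n ∈ Finset.range A, ∑ k ∈ Finset.range M,
            (if p ^ (k + 1) ∣ n * (a * b) + c then 1 else 0) := by
          refine Finset.sum_congr rfl fun n _ => ?_
          rw [Finset.card_filter]
      _ = ∑ k ∈ Finset.range M, ∑ n ∈ Finset.range A,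
            (if p ^ (k + 1) ∣ n * (a * b) + c then 1 else 0) := Finset.sum_comm
      _ = _ := by
          refine Finset.sum_congr rfl fun k _ => ?_
          rw [← Finset.card_filter]
  -- modular characterizations
  have hcopbq : ∀ k : ℕ, Nat.Coprime (p ^ k) b := fun k => Nat.Coprime.pow_left k hcopb.symm
  have hcopabq : ∀ k : ℕ, Nat.Coprime (p ^ k) (a * b) := fun k => Nat.Coprime.pow_left k hcop
  have hdvd_bA : ∀ k, k ≤ K → p ^ k ∣ b * A + r := by
    intro k hk
    rw [I1]
    exact Dvd.dvd.mul_left (pow_dvd_pow p hk) r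
  have hdvd_abβ : ∀ k, k ≤ K → p ^ k ∣ a * b * β + c := by
    intro k hk
    rw [I2]
    exact Dvd.dvd.mul_left (pow_dvd_pow p hk) g
  have hiffU : ∀ k, k ≤ K → ∀ n : ℕ, (p ^ k ∣ n * b + r ↔ n % p ^ k = A % p ^ k) := by
    intro k hk n
    have h := dvd_iff_mod (p ^ k) b r A (hcopbq k) (hdvd_bA k hk) n
    rwa [mul_comm b n] at h
  have hiffW : ∀ k, k ≤ K → ∀ n : ℕ, (p ^ k ∣ n * (a * b) + c ↔ n % p ^ k = β % p ^ k) := by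
    intro k hk n
    have h := dvd_iff_mod (p ^ k) (a * b) c β (hcopabq k) (hdvd_abβ k hk) n
    rwa [mul_comm (a * b) n] at h
  -- special levels
  have hspecial : ∀ i, i < d →
      β % p ^ ((m0 + i + 1) * L) < A % p ^ ((m0 + i + 1) * L) := by
    intro i hid
    obtain ⟨v, hveq, hv2⟩ := hvex (m0 + i + 1) (by omega)
    have hq0 : 0 < p ^ ((m0 + i + 1) * L) := by omega
    have hkK : (m0 + i + 1) * L ≤ K := by
      rw [hKdef]
      exact Nat.mul_le_mul_right L (by omega)
    have hqQ : p ^ ((m0 + i + 1) * L) ∣ p ^ K := pow_dvd_pow p hkK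
    have hI1' : b * (r * a * v) + r = r * p ^ ((m0 + i + 1) * L) := by
      calc b * (r * a * v) + r = r * (a * b * v) + r := by ring
        _ = r * (a * b * v + 1) := by ring
        _ = r * p ^ ((m0 + i + 1) * L) := by rw [hveq]
    have hx1q : r * a * v < p ^ ((m0 + i + 1) * L) := by
      have h2 : r * p ^ ((m0 + i + 1) * L) < b * p ^ ((m0 + i + 1) * L) :=
        mul_lt_mul_of_pos_right (by omega) hq0
      have h1 : b * (r * a * v) < b * p ^ ((m0 + i + 1) * L) := by omega
      exact Nat.lt_of_mul_lt_mul_left h1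
    have hAmod : A % p ^ ((m0 + i + 1) * L) = r * a * v := by
      apply uniq_res (p ^ ((m0 + i + 1) * L)) b r _ _ hq0 (hcopbq _)
        (Nat.mod_lt _ hq0) hx1q
      · have h1 : A % p ^ ((m0 + i + 1) * L) ≡ A [MOD p ^ ((m0 + i + 1) * L)] :=
          Nat.mod_modEq A _
        have h2 : b * (A % p ^ ((m0 + i + 1) * L)) + r ≡ b * A + r
            [MOD p ^ ((m0 + i + 1) * L)] := (h1.mul_left b).add_right r
        have h3 : p ^ ((m0 + i + 1) * L) ∣ b * A + r := hdvd_bA _ hkK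
        exact Nat.modEq_zero_iff_dvd.mp (h2.trans (Nat.modEq_zero_iff_dvd.mpr h3))
      · rw [hI1']
        exact dvd_mul_left _ r
    obtain ⟨x2, hx2⟩ : ∃ x2 : ℕ, x2 + 2 = g * v := by
      refine ⟨g * v - 2, ?_⟩
      have h1 : 1 * 2 ≤ g * v := Nat.mul_le_mul hg2 hv2
      omega
    have hI2' : a * b * x2 + c = g * p ^ ((m0 + i + 1) * L) := by
      calc a * b * x2 + c = a * b * x2 + (g + 2 * (a * b)) := by rw [hc2]
        _ = a * b * (x2 + 2) + g := by ring
        _ = a * b * (g * v) + g := by rw [hx2]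
        _ = g * (a * b * v + 1) := by ring
        _ = g * p ^ ((m0 + i + 1) * L) := by rw [hveq]
    have hx2q : x2 < p ^ ((m0 + i + 1) * L) := by
      have h2 : g * p ^ ((m0 + i + 1) * L) < a * b * p ^ ((m0 + i + 1) * L) :=
        mul_lt_mul_of_pos_right hgab hq0
      have h1 : a * b * x2 < a * b * p ^ ((m0 + i + 1) * L) := by omega
      exact Nat.lt_of_mul_lt_mul_left h1
    have hβmod : β % p ^ ((m0 + i + 1) * L) = x2 := by
      apply uniq_res (p ^ ((m0 + i + 1) * L)) (a * b) c _ _ hq0 (hcopabq _)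
        (Nat.mod_lt _ hq0) hx2q
      · have h1 : β % p ^ ((m0 + i + 1) * L) ≡ β [MOD p ^ ((m0 + i + 1) * L)] :=
          Nat.mod_modEq β _
        have h2 : a * b * (β % p ^ ((m0 + i + 1) * L)) + c ≡ a * b * β + c
            [MOD p ^ ((m0 + i + 1) * L)] := (h1.mul_left (a * b)).add_right c
        have h3 : p ^ ((m0 + i + 1) * L) ∣ a * b * β + c := hdvd_abβ _ hkK
        exact Nat.modEq_zero_iff_dvd.mp (h2.trans (Nat.modEq_zero_iff_dvd.mpr h3))
      · rw [hI2']
        exact dvd_mul_left _ g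
    rw [hAmod, hβmod]
    have h5 : r * a * v = g * v + b * v := by rw [hra]; ring
    have h6 : 1 * 1 ≤ b * v := Nat.mul_le_mul (by omega) (by omega)
    omega
  -- the special index set
  set T : Finset ℕ := (Finset.range d).image (fun i => (m0 + i + 1) * L - 1) with hT
  have hTcard : T.card = d := by
    rw [hT, Finset.card_image_of_injOn, Finset.card_range]
    intro x hx y hy hxy
    simp only at hxy
    have h1 : 0 < (m0 + x + 1) * L := Nat.mul_pos (by omega) hL1
    have h2 : 0 < (m0 + y + 1) * L := Nat.mul_pos (by omega) hL1
    have h3 : (m0 + x + 1) * L = (m0 + y + 1) * L := by omega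
    have h4 := Nat.eq_of_mul_eq_mul_right hL1 h3
    omega
  have hTsub : T ⊆ Finset.range M := by
    intro x hx
    rw [hT] at hx
    simp only [Finset.mem_image, Finset.mem_range] at hx
    obtain ⟨i, hid, rfl⟩ := hx
    simp only [Finset.mem_range]
    have h1 : (m0 + i + 1) * L ≤ K := by
      rw [hKdef]
      exact Nat.mul_le_mul_right L (by omega)
    omega
  have hχ : (∑ k ∈ Finset.range M, if k ∈ T then 1 else 0) = d := by
    rw [Finset.sum_boole]
    rw [Finset.filter_mem_eq_inter, Finset.inter_eq_right.mpr hTsub]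
    simpa using hTcard
  -- pointwise comparison
  have hpoint : ∀ k ∈ Finset.range M,
      ((Finset.range A).filter (fun n => p ^ (k + 1) ∣ n * b + r)).card
        + (if k ∈ T then 1 else 0)
        ≤ ((Finset.range A).filter (fun n => p ^ (k + 1) ∣ n * (a * b) + c)).card := by
    intro k _
    have hq0 : (0:ℕ) < p ^ (k + 1) := by positivity
    by_cases hkK : k + 1 ≤ K
    · have hCU : ((Finset.range A).filter (fun n => p ^ (k + 1) ∣ n * b + r)).card
          ≤ A / p ^ (k + 1) := by
        have hfe : (Finset.range A).filter (fun n => p ^ (k + 1) ∣ n * b + r) =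
            (Finset.range A).filter (fun n => n % p ^ (k + 1) = A % p ^ (k + 1)) :=
          Finset.filter_congr fun n _ => by rw [hiffU (k + 1) hkK n]
        rw [hfe]
        exact count_res_le (p ^ (k + 1)) A hq0
      have hCW : A / p ^ (k + 1)
            + (if β % p ^ (k + 1) < A % p ^ (k + 1) then 1 else 0)
          ≤ ((Finset.range A).filter (fun n => p ^ (k + 1) ∣ n * (a * b) + c)).card := by
        have hfe : (Finset.range A).filter (fun n => p ^ (k + 1) ∣ n * (a * b) + c) =
            (Finset.range A).filter (fun n => n % p ^ (k + 1) = β % p ^ (k + 1)) :=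
          Finset.filter_congr fun n _ => by rw [hiffW (k + 1) hkK n]
        rw [hfe]
        exact count_res_ge (p ^ (k + 1)) A (β % p ^ (k + 1)) hq0 (Nat.mod_lt _ hq0)
      have hind : (if k ∈ T then (1:ℕ) else 0)
          ≤ (if β % p ^ (k + 1) < A % p ^ (k + 1) then 1 else 0) := by
        by_cases hkT : k ∈ T
        · rw [if_pos hkT]
          rw [hT] at hkT
          simp only [Finset.mem_image, Finset.mem_range] at hkT
          obtain ⟨i, hid, hie⟩ := hkT
          have h1 : 0 < (m0 + i + 1) * L := Nat.mul_pos (by omega) hL1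
          have h2 : k + 1 = (m0 + i + 1) * L := by omega
          rw [h2, if_pos (hspecial i hid)]
        · rw [if_neg hkT]
          omega
      omega
    · have hCU0 : ((Finset.range A).filter (fun n => p ^ (k + 1) ∣ n * b + r)).card = 0 := by
        rw [Finset.card_eq_zero, Finset.filter_eq_empty_iff]
        intro n hn hdvd
        have hKdvd : p ^ K ∣ n * b + r := dvd_trans (pow_dvd_pow p (by omega)) hdvd
        have h1 := (hiffU K le_rfl n).mp hKdvd
        rw [Nat.mod_eq_of_lt hAQ] at h1
        have hn' := Finset.mem_range.mp hn
        have h2 : n % p ^ K ≤ n := Nat.mod_le n _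
        omega
      have hkT : k ∉ T := by
        intro hkT
        rw [hT] at hkT
        simp only [Finset.mem_image, Finset.mem_range] at hkT
        obtain ⟨i, hid, hie⟩ := hkT
        have h1 : 0 < (m0 + i + 1) * L := Nat.mul_pos (by omega) hL1
        have h2 : (m0 + i + 1) * L ≤ K := by
          rw [hKdef]
          exact Nat.mul_le_mul_right L (by omega)
        omega
      rw [hCU0, if_neg hkT]
      exact Nat.zero_le _
  rw [hSUeq, hSWeq, ← hχ, ← Finset.sum_add_distrib]
  exact Finset.sum_le_sum hpoint
end

section
/- Let p be a prime number, let a, b ≥ 2 be coprime integers with p not dividing a·b, let j, r be integers with 1 ≤ j ≤ a−1 and 1 ≤ r ≤ b−1, and set c := r·a + j·b + a·b. Let M ∈ ℕ be such that p^M ≥ c and p^M ≡ c (mod a·b), and set N := (p^M − c)/(a·b). Then ν_p( ∏_{n=0}^{N} (n·b+r)/(n·a·b + c) ) ≤ −card{ M' ∈ ℕ : 1 ≤ M' ≤ M, p^{M'} ≥ c and p^{M'} ≡ c (mod a·b) }. -/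
open Finset

private lemma phi_mod {pk N n A c : ℕ} (hn : n ≤ N)
    (hNc : pk ∣ N * A + c) : pk ∣ (n + (N - n) % pk) * A + c := by
  have hmd := Nat.mod_add_div (N - n) pk
  have key : N = (n + (N - n) % pk) + pk * ((N - n) / pk) := by omega
  have h2 : N * A + c = pk * (((N - n) / pk) * A) + ((n + (N - n) % pk) * A + c) := by
    conv_lhs => rw [key]
    ring
  rw [h2] at hNc
  exact (Nat.dvd_add_right ⟨_, rfl⟩).mp hNc

private lemma phi_inj {pk N b r : ℕ} (hcop : Nat.Coprime pk b)
    {n₁ n₂ : ℕ} (h1 : n₁ ≤ N) (h2 : n₂ ≤ N)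
    (hd1 : pk ∣ n₁ * b + r) (hd2 : pk ∣ n₂ * b + r)
    (heq : n₁ + (N - n₁) % pk = n₂ + (N - n₂) % pk) : n₁ = n₂ := by
  wlog hle : n₂ ≤ n₁ generalizing n₁ n₂
  · exact (this h2 h1 hd2 hd1 heq.symm (le_of_not_ge hle)).symm
  have hdd : pk ∣ (n₁ - n₂) * b := by
    have h3 : (n₁ - n₂) * b = (n₁ * b + r) - (n₂ * b + r) := by
      rw [Nat.sub_mul]; omega
    rw [h3]; exact Nat.dvd_sub hd1 hd2
  obtain ⟨t, ht⟩ := hcop.dvd_of_dvd_mul_right hdd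
  have h4 : (N - n₂) % pk = (N - n₁) % pk := by
    have hN2 : N - n₂ = (N - n₁) + pk * t := by omega
    rw [hN2, Nat.add_mul_mod_self_left]
  omega

private lemma count_le_aux {pk N b r A c : ℕ} (hcop : Nat.Coprime pk b)
    (hNc : pk ∣ N * A + c) :
    ((range (N + 1)).filter (fun n => pk ∣ n * b + r)).card ≤
    ((range (N + 1)).filter (fun n => pk ∣ n * A + c)).card := by
  apply Finset.card_le_card_of_injOn (fun n => n + (N - n) % pk)
  · intro n hn
    simp only [Finset.mem_coe, mem_filter, mem_range] at hn ⊢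
    have hn' : n ≤ N := by omega
    refine ⟨by have := Nat.mod_le (N - n) pk; omega, phi_mod hn' hNc⟩
  · intro n₁ h1 n₂ h2 heq
    simp only [Finset.coe_filter, Set.mem_setOf_eq, mem_range] at h1 h2
    exact phi_inj hcop (by omega) (by omega) h1.2 h2.2 heq

private lemma count_lt_aux {pk N b r A c m : ℕ} (hr : 0 < r)
    (hcop : Nat.Coprime pk b) (hNc : pk ∣ N * A + c)
    (hm : m ≤ N) (hmA : m * A + c = pk) (hmb : m * b + r < pk) :
    ((range (N + 1)).filter (fun n => pk ∣ n * b + r)).card + 1 ≤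
    ((range (N + 1)).filter (fun n => pk ∣ n * A + c)).card := by
  have hmB : m ∈ (range (N + 1)).filter (fun n => pk ∣ n * A + c) := by
    simp only [mem_filter, mem_range]
    exact ⟨by omega, hmA ▸ dvd_refl pk⟩
  have hcard : ((range (N + 1)).filter (fun n => pk ∣ n * b + r)).card ≤
      (((range (N + 1)).filter (fun n => pk ∣ n * A + c)).erase m).card := by
    apply Finset.card_le_card_of_injOn (fun n => n + (N - n) % pk)
    · intro n hn
      simp only [Finset.mem_coe, mem_filter, mem_range] at hn
      have hn' : n ≤ N := by omega
      rw [Finset.mem_coe, Finset.mem_erase]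
      refine ⟨?_, ?_⟩
      · intro hne
        have hnm : n ≤ m := by beta_reduce at hne; have := Nat.mod_le (N - n) pk; omega
        have hlt : n * b + r < pk := by
          have : n * b ≤ m * b := Nat.mul_le_mul_right b hnm
          omega
        have := Nat.le_of_dvd (by omega) hn.2
        omega
      · simp only [mem_filter, mem_range]
        refine ⟨by have := Nat.mod_le (N - n) pk; omega, phi_mod hn' hNc⟩
    · intro n₁ h1 n₂ h2 heq
      simp only [Finset.coe_filter, Set.mem_setOf_eq, mem_range] at h1 h2
      exact phi_inj hcop (by omega) (by omega) h1.2 h2.2 heq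
  rw [Finset.card_erase_of_mem hmB] at hcard
  have : 0 < ((range (N + 1)).filter (fun n => pk ∣ n * A + c)).card :=
    Finset.card_pos.mpr ⟨m, hmB⟩
  omega

private lemma val_eq_card {p x M : ℕ} (hp : p.Prime) (hx : x ≠ 0) (hxM : x ≤ p ^ M) :
    padicValNat p x = ((Finset.Icc 1 M).filter (fun k => p ^ k ∣ x)).card := by
  have hν : padicValNat p x ≤ M := by
    have h1 : p ^ padicValNat p x ∣ x := pow_padicValNat_dvd
    have h2 : p ^ padicValNat p x ≤ p ^ M :=
      le_trans (Nat.le_of_dvd (Nat.pos_of_ne_zero hx) h1) hxM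
    exact (Nat.pow_le_pow_iff_right hp.one_lt).mp h2
  have hset : (Finset.Icc 1 M).filter (fun k => p ^ k ∣ x)
      = Finset.Icc 1 (padicValNat p x) := by
    ext k
    simp only [Finset.mem_filter, Finset.mem_Icc]
    constructor
    · rintro ⟨⟨hk1, _⟩, hdvd⟩
      refine ⟨hk1, ?_⟩
      have := (Nat.Prime.pow_dvd_iff_le_factorization hp hx).mp hdvd
      rwa [Nat.factorization_def x hp] at this
    · rintro ⟨hk1, hk2⟩
      exact ⟨⟨hk1, le_trans hk2 hν⟩, dvd_trans (pow_dvd_pow p hk2) pow_padicValNat_dvd⟩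
  rw [hset, Nat.card_Icc]
  omega

/-- quantitative valuation estimate from the proof of Theorem 3.1. -/
theorem stmt1 (p : ℕ) (hp : p.Prime) (a b : ℕ) (ha : 2 ≤ a) (hb : 2 ≤ b)
    (hab : Nat.Coprime a b) (hpab : ¬ p ∣ a * b)
    (j r : ℕ) (hj1 : 1 ≤ j) (hj2 : j ≤ a - 1) (hr1 : 1 ≤ r) (hr2 : r ≤ b - 1)
    (c : ℕ) (hc : c = r * a + j * b + a * b)
    (M : ℕ) (hM1 : c ≤ p ^ M) (hM2 : p ^ M ≡ c [MOD a * b])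
    (N : ℕ) (hN : N = (p ^ M - c) / (a * b)) :
    padicValRat p (∏ n ∈ Finset.range (N + 1), ((n * b + r : ℚ) / (n * a * b + c)))
      ≤ -(((Finset.Icc 1 M).filter
            (fun M' => c ≤ p ^ M' ∧ p ^ M' ≡ c [MOD a * b])).card : ℤ) := by
  haveI := Fact.mk hp
  have hab0 : 0 < a * b := by positivity
  have hc0 : 0 < c := by nlinarith
  have hrc : r < c := by nlinarith
  have hdvdM : a * b ∣ p ^ M - c := (Nat.modEq_iff_dvd' hM1).mp hM2.symm
  have hNab : N * (a * b) + c = p ^ M := by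
    rw [hN, Nat.div_mul_cancel hdvdM]; omega
  have hpb : ¬ p ∣ b := fun h => hpab (h.mul_left a)
  have hcop_b : ∀ k : ℕ, Nat.Coprime (p ^ k) b :=
    fun k => (Nat.Prime.coprime_iff_not_dvd hp |>.mpr hpb).pow_left k
  -- the natural-number products
  set P := ∏ n ∈ Finset.range (N + 1), (n * b + r) with hP
  set Q := ∏ n ∈ Finset.range (N + 1), (n * (a * b) + c) with hQ
  have hPpos : 0 < P := Finset.prod_pos (fun n _ => by omega)
  have hQpos : 0 < Q := Finset.prod_pos (fun n _ => by omega)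
  -- per-term bounds
  have hnum_le : ∀ n ∈ Finset.range (N + 1), n * b + r ≤ p ^ M := by
    intro n hn
    rw [Finset.mem_range] at hn
    have h1 : n * b ≤ N * (a * b) := by
      calc n * b ≤ N * b := Nat.mul_le_mul_right b (by omega)
        _ ≤ N * (a * b) := Nat.mul_le_mul_left N (Nat.le_mul_of_pos_left b (by omega))
    omega
  have hden_le : ∀ n ∈ Finset.range (N + 1), n * (a * b) + c ≤ p ^ M := by
    intro n hn
    rw [Finset.mem_range] at hn
    have : n * (a * b) ≤ N * (a * b) := Nat.mul_le_mul_right _ (by omega)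
    omega
  -- rewrite the rational product
  have hprod : (∏ n ∈ Finset.range (N + 1), ((n * b + r : ℚ) / (n * a * b + c)))
      = (P : ℚ) / (Q : ℚ) := by
    rw [hP, hQ]
    push_cast
    rw [← Finset.prod_div_distrib]
    apply Finset.prod_congr rfl
    intro n _
    ring
  have hPQ : padicValRat p ((P : ℚ) / (Q : ℚ))
      = (padicValNat p P : ℤ) - (padicValNat p Q : ℤ) := by
    rw [padicValRat.div (p := p) (by exact_mod_cast hPpos.ne') (by exact_mod_cast hQpos.ne'),
      padicValRat.of_nat, padicValRat.of_nat]
  -- valuations of products as sums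
  have hvalP : padicValNat p P = ∑ n ∈ Finset.range (N + 1), padicValNat p (n * b + r) := by
    rw [hP, ← Nat.factorization_def _ hp,
      Nat.factorization_prod (fun n _ => by omega)]
    rw [Finset.sum_apply']
    exact Finset.sum_congr rfl (fun n _ => Nat.factorization_def _ hp)
  have hvalQ : padicValNat p Q = ∑ n ∈ Finset.range (N + 1), padicValNat p (n * (a * b) + c) := by
    rw [hQ, ← Nat.factorization_def _ hp,
      Nat.factorization_prod (fun n _ => by omega)]
    rw [Finset.sum_apply']
    exact Finset.sum_congr rfl (fun n _ => Nat.factorization_def _ hp)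
  -- turn into double counting
  have hvalP' : padicValNat p P
      = ∑ k ∈ Finset.Icc 1 M, ((range (N + 1)).filter (fun n => p ^ k ∣ n * b + r)).card := by
    rw [hvalP]
    have h1 : ∀ n ∈ Finset.range (N + 1),
        padicValNat p (n * b + r) = ((Finset.Icc 1 M).filter (fun k => p ^ k ∣ n * b + r)).card :=
      fun n hn => val_eq_card hp (by omega) (hnum_le n hn)
    rw [Finset.sum_congr rfl h1]
    simp only [Finset.card_filter]
    rw [Finset.sum_comm]
  have hvalQ' : padicValNat p Q
      = ∑ k ∈ Finset.Icc 1 M, ((range (N + 1)).filter (fun n => p ^ k ∣ n * (a * b) + c)).card := by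
    rw [hvalQ]
    have h1 : ∀ n ∈ Finset.range (N + 1),
        padicValNat p (n * (a * b) + c)
          = ((Finset.Icc 1 M).filter (fun k => p ^ k ∣ n * (a * b) + c)).card :=
      fun n hn => val_eq_card hp (by omega) (hden_le n hn)
    rw [Finset.sum_congr rfl h1]
    simp only [Finset.card_filter]
    rw [Finset.sum_comm]
  -- the key term-wise estimate
  have hkey : ∀ k ∈ Finset.Icc 1 M,
      ((range (N + 1)).filter (fun n => p ^ k ∣ n * b + r)).card
        + (if c ≤ p ^ k ∧ p ^ k ≡ c [MOD a * b] then 1 else 0)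
      ≤ ((range (N + 1)).filter (fun n => p ^ k ∣ n * (a * b) + c)).card := by
    intro k hk
    rw [Finset.mem_Icc] at hk
    have hNc : p ^ k ∣ N * (a * b) + c := hNab ▸ pow_dvd_pow p hk.2
    by_cases hspec : c ≤ p ^ k ∧ p ^ k ≡ c [MOD a * b]
    · rw [if_pos hspec]
      obtain ⟨hck, hmod⟩ := hspec
      have hdvdk : a * b ∣ p ^ k - c := (Nat.modEq_iff_dvd' hck).mp hmod.symm
      set m := (p ^ k - c) / (a * b) with hm
      have hmab : m * (a * b) + c = p ^ k := by
        rw [hm, Nat.div_mul_cancel hdvdk]; omega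
      have hmN : m ≤ N := by
        have hle : m * (a * b) ≤ N * (a * b) := by
          have : p ^ k ≤ p ^ M := Nat.pow_le_pow_right hp.pos hk.2
          omega
        exact Nat.le_of_mul_le_mul_right hle hab0
      have hmb : m * b + r < p ^ k := by
        have h1 : m * b ≤ m * (a * b) := Nat.mul_le_mul_left m (Nat.le_mul_of_pos_left b (by omega))
        omega
      exact count_lt_aux (by omega) (hcop_b k) hNc hmN hmab hmb
    · rw [if_neg hspec]
      simpa using count_le_aux (r := r) (hcop_b k) hNc
  -- sum it up
  have hsum : padicValNat p P
      + ((Finset.Icc 1 M).filter (fun M' => c ≤ p ^ M' ∧ p ^ M' ≡ c [MOD a * b])).card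
      ≤ padicValNat p Q := by
    rw [hvalP', hvalQ', Finset.card_filter, ← Finset.sum_add_distrib]
    exact Finset.sum_le_sum hkey
  rw [hprod, hPQ]
  have hsum' : (padicValNat p P : ℤ) + (((Finset.Icc 1 M).filter
      (fun M' => c ≤ p ^ M' ∧ p ^ M' ≡ c [MOD a * b])).card : ℤ)
      ≤ (padicValNat p Q : ℤ) := by exact_mod_cast hsum
  omega
end

section
/- Let p be a prime number, let a, b, r, c, M, M', N be natural numbers with p not dividing a·b, r ≥ 1, c ≥ 1, 1 ≤ M' ≤ M, and N·a·b + c = p^M. Define P_{M'} := {n : 0 ≤ n ≤ N, p^{M'} ∣ n·b + r} and Q_{M'} := {n : 0 ≤ n ≤ N, p^{M'} ∣ n·a·b + c}. Then |P_{M'}| ≤ |Q_{M'}|. -/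
/-- `|P_{M'}| ≤ |Q_{M'}|` in the proof of Theorem 3.1. -/
theorem stmt3 (p : ℕ) (hp : p.Prime) (a b r c M M' N : ℕ)
    (hpab : ¬ p ∣ a * b) (hr : 1 ≤ r) (hc : 1 ≤ c)
    (hM'1 : 1 ≤ M') (hM'M : M' ≤ M) (hN : N * a * b + c = p ^ M) :
    ((Finset.range (N + 1)).filter (fun n => p ^ M' ∣ n * b + r)).card
      ≤ ((Finset.range (N + 1)).filter (fun n => p ^ M' ∣ n * a * b + c)).card := by
  set q := p ^ M' with hq
  have hq0 : 0 < q := pow_pos hp.pos _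
  have hqM : q ∣ p ^ M := pow_dvd_pow p hM'M
  have hpb : ¬ p ∣ b := fun h => hpab (h.mul_left a)
  have hcop : Nat.Coprime q b :=
    Nat.Coprime.pow_left _ ((Nat.Prime.coprime_iff_not_dvd hp).mpr hpb)
  -- Step 1: |P| ≤ N/q + 1
  have h1 : ((Finset.range (N + 1)).filter (fun n => q ∣ n * b + r)).card ≤ N / q + 1 := by
    set P := (Finset.range (N + 1)).filter (fun n => q ∣ n * b + r) with hP
    rcases P.eq_empty_or_nonempty with h | h
    · simp [h]
    · obtain ⟨n0, hn0P, hn0min⟩ := P.exists_min_image id h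
      have hmemP : ∀ n ∈ P, n ≤ N ∧ q ∣ n * b + r := by
        intro n hn
        have := Finset.mem_filter.mp hn
        exact ⟨by have := Finset.mem_range.mp this.1; omega, this.2⟩
      have hkey : ∀ n ∈ P, q ∣ n - n0 := by
        intro n hn
        have hn0 := hmemP n0 hn0P
        have hnn := hmemP n hn
        have hle : n0 ≤ n := hn0min n hn
        have hd : q ∣ (n - n0) * b := by
          have : (n - n0) * b = (n * b + r) - (n0 * b + r) := by
            rw [Nat.sub_mul]; have : n0 * b ≤ n * b := Nat.mul_le_mul_right b hle; omega
          rw [this]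
          exact Nat.dvd_sub hnn.2 hn0.2
        exact (Nat.Coprime.dvd_of_dvd_mul_right hcop hd)
      have hcard : P.card ≤ (Finset.range (N / q + 1)).card := by
        apply Finset.card_le_card_of_injOn (fun n => (n - n0) / q)
        · intro n hn
          simp only [Finset.mem_range]
          have h1 := (hmemP n hn).1
          have : (n - n0) / q ≤ N / q := Nat.div_le_div_right (by omega)
          rw [Finset.mem_coe, Finset.mem_range]
          omega
        · intro n hn m hm hnm
          have hdn := hkey n hn
          have hdm := hkey m hm
          have hlen : n0 ≤ n := hn0min n hn
          have hlem : n0 ≤ m := hn0min m hm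
          have hnm' : (n - n0) / q = (m - n0) / q := hnm
          have : n - n0 = m - n0 := by
            rw [← Nat.div_mul_cancel hdn, ← Nat.div_mul_cancel hdm, hnm']
          omega
      simpa using hcard
  -- Step 2: N/q + 1 ≤ |Q|
  have h2 : N / q + 1 ≤ ((Finset.range (N + 1)).filter (fun n => q ∣ n * a * b + c)).card := by
    have hcard : (Finset.range (N / q + 1)).card ≤
        ((Finset.range (N + 1)).filter (fun n => q ∣ n * a * b + c)).card := by
      apply Finset.card_le_card_of_injOn (fun k => N - k * q)
      · intro k hk
        have hk' : k ≤ N / q := by have := Finset.mem_range.mp hk; omega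
        have hkq : k * q ≤ N := (Nat.le_div_iff_mul_le hq0).mp hk'
        refine Finset.mem_filter.mpr ⟨Finset.mem_range.mpr (by dsimp only; omega), ?_⟩
        have hle : k * q * a * b ≤ N * a * b :=
          Nat.mul_le_mul_right b (Nat.mul_le_mul_right a hkq)
        have heq : (N - k * q) * a * b + c = p ^ M - k * q * a * b := by
          rw [Nat.sub_mul, Nat.sub_mul]; omega
        rw [heq]
        exact Nat.dvd_sub hqM ⟨k * a * b, by ring⟩
      · intro k hk k' hk' hkk
        have h1 : k * q ≤ N := (Nat.le_div_iff_mul_le hq0).mp (by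
          have := Finset.mem_range.mp hk; omega)
        have h2 : k' * q ≤ N := (Nat.le_div_iff_mul_le hq0).mp (by
          have := Finset.mem_range.mp hk'; omega)
        have : k * q = k' * q := by simp only at hkk; omega
        exact Nat.eq_of_mul_eq_mul_right hq0 this
    simpa using hcard
  omega
end

section
/- Let K be a field of characteristic 0, let a, b be coprime positive integers, and let f = y^a + Σ_{k=1}^{a−1} f_k(x)·y^k + f_0(x) ∈ K[x,y] with f_k(x) ∈ K[x]. Set B := K[x,y]/(f), let Ω := Ω_{B/K} be the module of Kähler differentials of B over K and let d : B → Ω be the universal derivation. Then for all natural numbers j and l, the element x^l·( Σ_{k=1}^{a−1} (j/(k+j))·f_k'(x)·y^k + f_0'(x) )·y^j·dx − l·x^{l−1}·( (a/(a+j))·y^a + Σ_{k=1}^{a−1} (k/(k+j))·f_k(x)·y^k )·y^j·dx of Ω lies in the image of d (here f_k' denotes the derivative of f_k, x, y denote the images of the variables in B, and for l = 0 the second summand is interpreted as 0). -/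
open MvPolynomial

set_option maxHeartbeats 1000000 in
set_option synthInstance.maxHeartbeats 1000000 in
lemma key (K : Type) [Field K] (I : Ideal (MvPolynomial (Fin 2) K)) (Q : MvPolynomial (Fin 2) K) :
    (KaehlerDifferential.D K (MvPolynomial (Fin 2) K ⧸ I)) ((Ideal.Quotient.mk I) Q)
      = (Ideal.Quotient.mk I) (pderiv 0 Q) •
          (KaehlerDifferential.D K (MvPolynomial (Fin 2) K ⧸ I)) ((Ideal.Quotient.mk I) (X 0))
        + (Ideal.Quotient.mk I) (pderiv 1 Q) •
          (KaehlerDifferential.D K (MvPolynomial (Fin 2) K ⧸ I)) ((Ideal.Quotient.mk I) (X 1)) := by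
  induction Q using MvPolynomial.induction_on with
  | C c =>
      have h : (Ideal.Quotient.mk I) (C c) = algebraMap K _ c := rfl
      simp [h, zero_smul (M₀ := (MvPolynomial (Fin 2) K ⧸ I)) (A := (Ω[MvPolynomial (Fin 2) K ⧸ I⁄K]))]
  | add p q hp hq =>
      rw [map_add, map_add, hp, hq]
      rw [show (pderiv (0:Fin 2)) (p+q) = pderiv 0 p + pderiv 0 q from map_add _ _ _]
      rw [show (pderiv (1:Fin 2)) (p+q) = pderiv 1 p + pderiv 1 q from map_add _ _ _]
      rw [map_add, map_add, add_smul (R := (MvPolynomial (Fin 2) K ⧸ I)) (M := (Ω[MvPolynomial (Fin 2) K ⧸ I⁄K])), add_smul (R := (MvPolynomial (Fin 2) K ⧸ I)) (M := (Ω[MvPolynomial (Fin 2) K ⧸ I⁄K]))]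
      abel
  | mul_X p i hp =>
      have main : ∀ i' : Fin 2,
          (KaehlerDifferential.D K (MvPolynomial (Fin 2) K ⧸ I)) ((Ideal.Quotient.mk I) (p * X i'))
            = (Ideal.Quotient.mk I) (pderiv 0 (p * X i')) •
                (KaehlerDifferential.D K (MvPolynomial (Fin 2) K ⧸ I)) ((Ideal.Quotient.mk I) (X 0))
              + (Ideal.Quotient.mk I) (pderiv 1 (p * X i')) •
                (KaehlerDifferential.D K (MvPolynomial (Fin 2) K ⧸ I)) ((Ideal.Quotient.mk I) (X 1)) := by
        intro i'
        rw [map_mul, Derivation.leibniz, hp]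
        match i' with
        | 0 =>
          have h0 : pderiv 0 (p * X (0:Fin 2)) = pderiv 0 p * X 0 + p := by
            rw [pderiv_mul, pderiv_X_self]; ring
          have h1 : pderiv 1 (p * X (0:Fin 2)) = pderiv 1 p * X 0 := by
            rw [pderiv_mul, pderiv_X_of_ne (by decide)]; ring
          rw [h0, h1, map_add, map_mul, map_mul, add_smul (R := (MvPolynomial (Fin 2) K ⧸ I)) (M := (Ω[MvPolynomial (Fin 2) K ⧸ I⁄K])), mul_smul (α := (MvPolynomial (Fin 2) K ⧸ I)) (β := (Ω[MvPolynomial (Fin 2) K ⧸ I⁄K])),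
            mul_smul (α := (MvPolynomial (Fin 2) K ⧸ I)) (β := (Ω[MvPolynomial (Fin 2) K ⧸ I⁄K])), smul_add (M := (MvPolynomial (Fin 2) K ⧸ I)) (A := (Ω[MvPolynomial (Fin 2) K ⧸ I⁄K]))]
          rw [smul_comm (α := (Ω[MvPolynomial (Fin 2) K ⧸ I⁄K])) ((Ideal.Quotient.mk I) (X (0:Fin 2)))]
          rw [smul_comm (α := (Ω[MvPolynomial (Fin 2) K ⧸ I⁄K])) ((Ideal.Quotient.mk I) (X (0:Fin 2)))]
          abel
        | 1 =>
          have h0 : pderiv 0 (p * X (1:Fin 2)) = pderiv 0 p * X 1 := by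
            rw [pderiv_mul, pderiv_X_of_ne (by decide)]; ring
          have h1 : pderiv 1 (p * X (1:Fin 2)) = pderiv 1 p * X 1 + p := by
            rw [pderiv_mul, pderiv_X_self]; ring
          rw [h0, h1, map_add, map_mul, map_mul, add_smul (R := (MvPolynomial (Fin 2) K ⧸ I)) (M := (Ω[MvPolynomial (Fin 2) K ⧸ I⁄K])), mul_smul (α := (MvPolynomial (Fin 2) K ⧸ I)) (β := (Ω[MvPolynomial (Fin 2) K ⧸ I⁄K])),
            mul_smul (α := (MvPolynomial (Fin 2) K ⧸ I)) (β := (Ω[MvPolynomial (Fin 2) K ⧸ I⁄K])), smul_add (M := (MvPolynomial (Fin 2) K ⧸ I)) (A := (Ω[MvPolynomial (Fin 2) K ⧸ I⁄K]))]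
          rw [smul_comm (α := (Ω[MvPolynomial (Fin 2) K ⧸ I⁄K])) ((Ideal.Quotient.mk I) (X (1:Fin 2)))]
          rw [smul_comm (α := (Ω[MvPolynomial (Fin 2) K ⧸ I⁄K])) ((Ideal.Quotient.mk I) (X (1:Fin 2)))]
          abel
      exact main i

open MvPolynomial

variable {K : Type} [Field K]

lemma pdX0pow (n : ℕ) : pderiv (0:Fin 2) ((X 0 : MvPolynomial (Fin 2) K) ^ n)
    = C (n:K) * X 0 ^ (n-1) := by
  rw [pderiv_pow, pderiv_X_self, mul_one]
  simp [MvPolynomial.C_eq_coe_nat]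

lemma pd0X1pow (n : ℕ) : pderiv (0:Fin 2) ((X 1 : MvPolynomial (Fin 2) K) ^ n) = 0 := by
  rw [pderiv_pow, pderiv_X_of_ne (by decide), mul_zero]

lemma pd1X1pow (n : ℕ) : pderiv (1:Fin 2) ((X 1 : MvPolynomial (Fin 2) K) ^ n)
    = C (n:K) * X 1 ^ (n-1) := by
  rw [pderiv_pow, pderiv_X_self, mul_one]
  simp [MvPolynomial.C_eq_coe_nat]

open MvPolynomial

section helpers
variable {K : Type} [Field K]

lemma pd1X0pow (n : ℕ) : pderiv (1:Fin 2) ((X 0 : MvPolynomial (Fin 2) K) ^ n) = 0 := by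
  rw [pderiv_pow, pderiv_X_of_ne (by decide), mul_zero]

lemma pd0_aeval (p : Polynomial K) :
    pderiv (0 : Fin 2) (Polynomial.aeval (X (0:Fin 2) : MvPolynomial (Fin 2) K) p)
      = Polynomial.aeval (X 0) (Polynomial.derivative p) := by
  induction p using Polynomial.induction_on with
  | C c => simp
  | add p q hp hq => simp [hp, hq]
  | monomial n c ih =>
      simp only [map_mul, Polynomial.aeval_C, Polynomial.aeval_X_pow, Polynomial.derivative_C_mul,
        Polynomial.derivative_X_pow, map_pow, Polynomial.aeval_X, map_natCast,
        Derivation.leibniz, pderiv_pow, pderiv_X_self, smul_eq_mul]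
      ring_nf
      simp [algebraMap_eq]

lemma pd1_aeval (p : Polynomial K) :
    pderiv (1 : Fin 2) (Polynomial.aeval (X (0:Fin 2) : MvPolynomial (Fin 2) K) p) = 0 := by
  induction p using Polynomial.induction_on with
  | C c => simp
  | add p q hp hq => simp [hp, hq]
  | monomial n c ih =>
      simp [Derivation.leibniz, pderiv_pow, pderiv_X_of_ne (show (0:Fin 2) ≠ 1 by decide)]
end helpers

open MvPolynomial in
set_option maxHeartbeats 2000000 in
set_option synthInstance.maxHeartbeats 1000000 in
/-- equality (18) of Denef–Vercauteren (equation (6) in the paper): the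
displayed 1-form on the curve `B = K[x,y]/(f)` is exact. -/
theorem stmt9 (K : Type) [Field K] [CharZero K]
    (a b : ℕ) (ha : 0 < a) (hb : 0 < b) (hab : Nat.Coprime a b)
    (f₀ : Polynomial K) (fc : ℕ → Polynomial K)
    (f : MvPolynomial (Fin 2) K)
    (hf : f = X 1 ^ a
      + (∑ k ∈ Finset.Icc 1 (a - 1), Polynomial.aeval (X 0) (fc k) * X 1 ^ k)
      + Polynomial.aeval (X 0) f₀)
    (j l : ℕ) :
    ((Ideal.Quotient.mk (Ideal.span {f}))
        (X 0 ^ l *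
          ((∑ k ∈ Finset.Icc 1 (a - 1),
              C ((j : K) / ((k : K) + (j : K))) *
                Polynomial.aeval (X 0) (Polynomial.derivative (fc k)) * X 1 ^ k)
            + Polynomial.aeval (X 0) (Polynomial.derivative f₀)) *
          X 1 ^ j
        - C (l : K) * X 0 ^ (l - 1) *
          (C ((a : K) / ((a : K) + (j : K))) * X 1 ^ a
            + ∑ k ∈ Finset.Icc 1 (a - 1),
                C ((k : K) / ((k : K) + (j : K))) * Polynomial.aeval (X 0) (fc k) * X 1 ^ k) *
          X 1 ^ j)) •
      (KaehlerDifferential.D K (MvPolynomial (Fin 2) K ⧸ Ideal.span {f}))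
        ((Ideal.Quotient.mk (Ideal.span {f})) (X 0))
      ∈ Set.range (KaehlerDifferential.D K (MvPolynomial (Fin 2) K ⧸ Ideal.span {f})) := by
  have hfI : (Ideal.Quotient.mk (Ideal.span {f})) f = 0 := by
    rw [Ideal.Quotient.eq_zero_iff_mem]; exact Ideal.mem_span_singleton_self f
  set G : MvPolynomial (Fin 2) K :=
    X 0 ^ l * (Polynomial.aeval (X 0) f₀ * X 1 ^ j
      + (∑ k ∈ Finset.Icc 1 (a-1),
          C ((j:K)/((k:K)+(j:K))) * Polynomial.aeval (X 0) (fc k) * X 1 ^ (k+j))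
      + C ((j:K)/((a:K)+(j:K))) * X 1 ^ (a+j)) with hG
  -- partial derivative in direction 1 lies in the ideal
  have hpd1 : pderiv (1:Fin 2) G ∈ Ideal.span {f} := by
    rcases Nat.eq_zero_or_pos j with hj | hj
    · subst hj
      have hG0 : G = X 0 ^ l * Polynomial.aeval (X 0) f₀ := by
        rw [hG]
        simp
      rw [hG0, pderiv_mul, pd1X0pow, pd1_aeval, mul_zero, zero_mul, zero_add]
      exact Ideal.zero_mem _
    · obtain ⟨j', rfl⟩ : ∃ j', j = j'+1 := ⟨j-1, by omega⟩
      have hsum : ∑ k ∈ Finset.Icc 1 (a-1), pderiv (1:Fin 2)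
            (C ((↑(j'+1):K)/((k:K)+(↑(j'+1):K))) * Polynomial.aeval (X 0) (fc k)
              * X 1 ^ (k+(j'+1)))
          = C ((↑(j'+1):ℕ):K) *
              ((∑ k ∈ Finset.Icc 1 (a-1), Polynomial.aeval (X 0) (fc k) * X 1 ^ k) * X 1 ^ j') := by
        rw [Finset.sum_mul, Finset.mul_sum]
        refine Finset.sum_congr rfl fun k hk => ?_
        have hk1 : 1 ≤ k := (Finset.mem_Icc.mp hk).1
        have hne : ((k:K)+((j':K)+1)) ≠ 0 := by
          have h0 : ((k + (j'+1) : ℕ) : K) ≠ 0 := Nat.cast_ne_zero.mpr (by omega)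
          push_cast at h0
          exact h0
        have hc : (C ((↑(j'+1):K)/((k:K)+(↑(j'+1):K))) : MvPolynomial (Fin 2) K)
            * C (((k+(j'+1)) : ℕ):K) = C ((↑(j'+1):ℕ):K) := by
          rw [← C_mul]
          congr 1
          push_cast
          rw [div_mul_eq_mul_div, mul_div_assoc, div_self hne, mul_one]
        simp only [pderiv_mul, pderiv_C, pd1_aeval, pd1X1pow, zero_mul, mul_zero,
          add_zero, zero_add]
        rw [show k+(j'+1)-1 = k+j' from by omega, pow_add]
        linear_combination ((Polynomial.aeval (X 0) (fc k) : MvPolynomial (Fin 2) K)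
          * X 1 ^ k * X 1 ^ j') * hc
      have hca : (C ((↑(j'+1):K)/((a:K)+(↑(j'+1):K))) : MvPolynomial (Fin 2) K)
          * C (((a+(j'+1)) : ℕ):K) = C ((↑(j'+1):ℕ):K) := by
        rw [← C_mul]
        congr 1
        have hne : ((a:K)+((j':K)+1)) ≠ 0 := by
          have h0 : ((a + (j'+1) : ℕ) : K) ≠ 0 := Nat.cast_ne_zero.mpr (by omega)
          push_cast at h0
          exact h0
        push_cast
        rw [div_mul_eq_mul_div, mul_div_assoc, div_self hne, mul_one]
      have hcalc : pderiv (1:Fin 2) G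
          = (C ((j'+1 : ℕ):K) * X 0 ^ l * X 1 ^ j') * f := by
        rw [hG, hf, pderiv_mul, pd1X0pow, zero_mul, zero_add, map_add, map_add, map_sum, hsum]
        rw [pderiv_mul, pd1_aeval, zero_mul, zero_add, pd1X1pow]
        rw [pderiv_mul, pderiv_C, zero_mul, zero_add, pd1X1pow]
        rw [show (j'+1)-1 = j' from by omega, show a+(j'+1)-1 = a+j' from by omega,
          pow_add (X 1 : MvPolynomial (Fin 2) K) a j']
        linear_combination ((X 0 : MvPolynomial (Fin 2) K) ^ l * X 1 ^ a * X 1 ^ j') * hca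
      rw [hcalc]
      exact Ideal.mem_span_singleton.2 (dvd_mul_left f _)
  -- sum identity used for the `x`-derivative
  have hks : (∑ k ∈ Finset.Icc 1 (a-1),
        C ((j:K)/((k:K)+(j:K))) * Polynomial.aeval (X 0) (fc k)
          * (X 1 : MvPolynomial (Fin 2) K) ^ k)
      + (∑ k ∈ Finset.Icc 1 (a-1),
        C ((k:K)/((k:K)+(j:K))) * Polynomial.aeval (X 0) (fc k) * X 1 ^ k)
      = ∑ k ∈ Finset.Icc 1 (a-1), Polynomial.aeval (X 0) (fc k) * X 1 ^ k := by
    rw [← Finset.sum_add_distrib]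
    refine Finset.sum_congr rfl fun k hk => ?_
    have hk1 : 1 ≤ k := (Finset.mem_Icc.mp hk).1
    have hne : ((k:K)+(j:K)) ≠ 0 := by
      have h0 : ((k + j : ℕ) : K) ≠ 0 := Nat.cast_ne_zero.mpr (by omega)
      push_cast at h0
      exact h0
    have hterm : (C ((j:K)/((k:K)+(j:K))) : MvPolynomial (Fin 2) K)
        + C ((k:K)/((k:K)+(j:K))) = 1 := by
      rw [← C_add, ← add_div]
      rw [show (j:K)+(k:K) = (k:K)+(j:K) from add_comm _ _, div_self hne, C_1]
    linear_combination ((X 1 : MvPolynomial (Fin 2) K) ^ k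
      * Polynomial.aeval (X 0) (fc k)) * hterm
  have hnea : ((a:K)+(j:K)) ≠ 0 := by
    have h0 : ((a + j : ℕ) : K) ≠ 0 := Nat.cast_ne_zero.mpr (by omega)
    push_cast at h0
    exact h0
  have hc1 : (C ((j:K)/((a:K)+(j:K))) : MvPolynomial (Fin 2) K)
      + C ((a:K)/((a:K)+(j:K))) = 1 := by
    rw [← C_add, ← add_div]
    rw [show (j:K)+(a:K) = (a:K)+(j:K) from add_comm _ _, div_self hnea, C_1]
  -- sums of derivatives
  have hsum0 : ∑ k ∈ Finset.Icc 1 (a-1), pderiv (0:Fin 2)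
        (C ((j:K)/((k:K)+(j:K))) * Polynomial.aeval (X 0) (fc k) * X 1 ^ (k+j))
      = (∑ k ∈ Finset.Icc 1 (a-1),
          C ((j:K)/((k:K)+(j:K))) * Polynomial.aeval (X 0) (Polynomial.derivative (fc k))
            * X 1 ^ k) * X 1 ^ j := by
    rw [Finset.sum_mul]
    refine Finset.sum_congr rfl fun k hk => ?_
    rw [pderiv_mul, pderiv_mul, pderiv_C, zero_mul, zero_add, pd0_aeval, pd0X1pow,
      mul_zero, add_zero, pow_add]
    ring
  have hsumS : (∑ k ∈ Finset.Icc 1 (a-1),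
        C ((j:K)/((k:K)+(j:K))) * Polynomial.aeval (X 0) (fc k)
          * (X 1 : MvPolynomial (Fin 2) K) ^ (k+j))
      = (∑ k ∈ Finset.Icc 1 (a-1),
          C ((j:K)/((k:K)+(j:K))) * Polynomial.aeval (X 0) (fc k) * X 1 ^ k) * X 1 ^ j := by
    rw [Finset.sum_mul]
    refine Finset.sum_congr rfl fun k hk => ?_
    rw [pow_add]
    ring
  have hpd0 : pderiv (0:Fin 2) G
      = (X 0 ^ l *
          ((∑ k ∈ Finset.Icc 1 (a - 1),
              C ((j : K) / ((k : K) + (j : K))) *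
                Polynomial.aeval (X 0) (Polynomial.derivative (fc k)) * X 1 ^ k)
            + Polynomial.aeval (X 0) (Polynomial.derivative f₀)) *
          X 1 ^ j
        - C (l : K) * X 0 ^ (l - 1) *
          (C ((a : K) / ((a : K) + (j : K))) * X 1 ^ a
            + ∑ k ∈ Finset.Icc 1 (a - 1),
                C ((k : K) / ((k : K) + (j : K))) * Polynomial.aeval (X 0) (fc k) * X 1 ^ k) *
          X 1 ^ j)
        + C (l:K) * X 0 ^ (l-1) * X 1 ^ j * f := by
    have hpa : (X 1 : MvPolynomial (Fin 2) K) ^ (a+j) = X 1 ^ a * X 1 ^ j := pow_add _ _ _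
    rw [hG, pderiv_mul, pdX0pow, map_add, map_add, map_sum, hsum0]
    rw [pderiv_mul, pd0_aeval, pd0X1pow, mul_zero, add_zero]
    rw [pderiv_mul, pderiv_C, zero_mul, zero_add, pd0X1pow, mul_zero]
    linear_combination (C (l:K) * (X 0 : MvPolynomial (Fin 2) K) ^ (l-1)) * hsumS
      + (C (l:K) * (X 0 : MvPolynomial (Fin 2) K) ^ (l-1) * C ((j:K)/((a:K)+(j:K)))) * hpa
      - (C (l:K) * (X 0 : MvPolynomial (Fin 2) K) ^ (l-1) * X 1 ^ j) * hf
      + (C (l:K) * (X 0 : MvPolynomial (Fin 2) K) ^ (l-1) * X 1 ^ j) * hks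
      + (C (l:K) * (X 0 : MvPolynomial (Fin 2) K) ^ (l-1) * X 1 ^ a * X 1 ^ j) * hc1
  refine ⟨(Ideal.Quotient.mk (Ideal.span {f})) G, ?_⟩
  rw [key K (Ideal.span {f}) G, hpd0, map_add, map_mul, hfI, mul_zero, add_zero,
    Ideal.Quotient.eq_zero_iff_mem.mpr hpd1,
    zero_smul (M₀ := MvPolynomial (Fin 2) K ⧸ Ideal.span {f})
      (A := Ω[MvPolynomial (Fin 2) K ⧸ Ideal.span {f}⁄K]), add_zero]
end

section
/- Let K be a field of characteristic 0, let a, b be coprime positive integers, let α ∈ K, and set B := K[x,y]/(y^a + x^b + α) with Ω := Ω_{B/K} the module of Kähler differentials and d : B → Ω the universal derivation. Then for all natural numbers l ≥ 1 and j ≥ 1, the element (l·a + j·b + a·b)·x^{l+b−1}·y^j·dx + l·a·α·x^{l−1}·y^j·dx of Ω lies in the image of d. -/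
set_option synthInstance.maxHeartbeats 1000000 in
set_option maxHeartbeats 1000000 in
open MvPolynomial in
/-- equality (10) in the proof of Theorem 3.1: on the superelliptic curve
`y^a + x^b + α = 0`, the 1-form `(l·a+j·b+a·b)·x^{l+b−1}·y^j·dx + l·a·α·x^{l−1}·y^j·dx`
is exact. -/
theorem stmt10 (K : Type) [Field K] [CharZero K]
    (a b : ℕ) (ha : 0 < a) (hb : 0 < b) (hab : Nat.Coprime a b) (α : K)
    (f : MvPolynomial (Fin 2) K) (hf : f = X 1 ^ a + X 0 ^ b + C α)
    (l j : ℕ) (hl : 1 ≤ l) (hj : 1 ≤ j) :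
    ((Ideal.Quotient.mk (Ideal.span {f}))
        (((l * a + j * b + a * b : ℕ) : MvPolynomial (Fin 2) K)
            * X 0 ^ (l + b - 1) * X 1 ^ j
          + ((l * a : ℕ) : MvPolynomial (Fin 2) K) * C α * X 0 ^ (l - 1) * X 1 ^ j)) •
      (KaehlerDifferential.D K (MvPolynomial (Fin 2) K ⧸ Ideal.span {f}))
        ((Ideal.Quotient.mk (Ideal.span {f})) (X 0))
      ∈ Set.range (KaehlerDifferential.D K (MvPolynomial (Fin 2) K ⧸ Ideal.span {f})) := by
  obtain ⟨a, rfl⟩ : ∃ a', a = a' + 1 := ⟨a - 1, by omega⟩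
  obtain ⟨b, rfl⟩ : ∃ b', b = b' + 1 := ⟨b - 1, by omega⟩
  obtain ⟨l, rfl⟩ : ∃ l', l = l' + 1 := ⟨l - 1, by omega⟩
  set B := MvPolynomial (Fin 2) K ⧸ Ideal.span {f} with hB
  set π : MvPolynomial (Fin 2) K →+* B := Ideal.Quotient.mk (Ideal.span {f}) with hπ
  set D := KaehlerDifferential.D K B with hD
  set x : B := π (X 0) with hx
  set y : B := π (X 1) with hy
  set c : B := π (C α) with hc
  have hrel : y ^ (a + 1) + x ^ (b + 1) + c = 0 := by
    have h0 : π (X 1 ^ (a + 1) + X 0 ^ (b + 1) + C α) = 0 := by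
      rw [← hf]
      exact Ideal.Quotient.eq_zero_iff_mem.mpr (Ideal.subset_span rfl)
    simpa [map_add, map_pow] using h0
  have hcalg : c = algebraMap K B α := by
    rw [hc, IsScalarTower.algebraMap_apply K (MvPolynomial (Fin 2) K) B,
      MvPolynomial.algebraMap_eq, Ideal.Quotient.algebraMap_eq]
  have hd : (a + 1) • y ^ a • D y + (b + 1) • x ^ b • D x = 0 := by
    have h1 := congrArg D hrel
    rw [map_add, map_add, Derivation.leibniz_pow, Derivation.leibniz_pow, hcalg,
      Derivation.map_algebraMap, map_zero, add_zero, Nat.add_sub_cancel,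
      Nat.add_sub_cancel] at h1
    exact h1
  refine ⟨-(((a + 1 : ℕ) : B) * (x ^ (l + 1) * y ^ (j + a + 1))), ?_⟩
  have e1 : l + 1 + (b + 1) - 1 = l + b + 1 := by omega
  have e2 : l + 1 - 1 = l := by omega
  rw [e1, e2]
  simp only [map_add, map_mul, map_pow, map_natCast, ← hx, ← hy, ← hc]
  have hDw : D (-((((a + 1 : ℕ) : B)) * (x ^ (l + 1) * y ^ (j + a + 1)))) =
      -(((a + 1 : ℕ) : B) • (x ^ (l + 1) • ((j + a + 1) • y ^ (j + a) • D y)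
        + y ^ (j + a + 1) • ((l + 1) • x ^ l • D x))) := by
    rw [map_neg, Derivation.leibniz, Derivation.map_natCast, smul_zero, add_zero,
      Derivation.leibniz, Derivation.leibniz_pow, Derivation.leibniz_pow,
      Nat.add_sub_cancel, Nat.add_sub_cancel]
  rw [hDw]
  have main : -(((a + 1 : ℕ) : B) • (x ^ (l + 1) • ((j + a + 1) • y ^ (j + a) • D y)
        + y ^ (j + a + 1) • ((l + 1) • x ^ l • D x)))
      = ((((l + 1) * (a + 1) + j * (b + 1) + (a + 1) * (b + 1) : ℕ) : B) * x ^ (l + b + 1) * y ^ j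
          + (((l + 1) * (a + 1) : ℕ) : B) * c * x ^ l * y ^ j) • D x
        - ((j + a + 1 : ℕ) : B) • ((x ^ (l + 1) * y ^ j) •
            ((a + 1) • y ^ a • D y + (b + 1) • x ^ b • D x)) := by
    match_scalars
    · push_cast
      ring
    · push_cast
      erw [Nat.cast_mul, Nat.cast_mul, Nat.cast_mul]
      push_cast
      linear_combination (-(((a : B) + 1) * ((l : B) + 1) * x ^ l * y ^ j)) * hrel
  rw [main, hd, smul_zero, smul_zero, sub_zero]
end

section
/- Let K be a field of characteristic 0, let a, b be coprime positive integers with a, b ≥ 2, let α ∈ K, and set B := K[x,y]/(y^a + x^b + α) with Ω := Ω_{B/K} the module of Kähler differentials and d : B → Ω the universal derivation. Then for all natural numbers N, j, r with 1 ≤ j ≤ a−1 and 1 ≤ r ≤ b−1, the element x^{(N+1)·b + (r−1)}·y^j·dx − ( ∏_{n=0}^{N} ( −(n·b+r)·a·α / ((n·b+r)·a + j·b + a·b) ) )·x^{r−1}·y^j·dx of Ω lies in the image of d. -/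
set_option maxHeartbeats 1000000
set_option synthInstance.maxHeartbeats 400000

open KaehlerDifferential in
lemma stepID (K : Type) [Field K] [CharZero K] (B : Type) [CommRing B] [Algebra K B]
    (a b : ℕ) (ha : 1 ≤ a) (hb : 1 ≤ b) (α : K) (x y : B)
    (hxy : y ^ a + x ^ b + algebraMap K B α = 0)
    (j l : ℕ) (hl : 1 ≤ l) :
    (((l * a + j * b + a * b : ℕ) : K)) • ((x ^ (l + b - 1) * y ^ j) • D K B x)
      + (((l * a : ℕ) : K) * α) • ((x ^ (l - 1) * y ^ j) • D K B x)
      + ((a : ℕ) : K) • D K B (x ^ l * y ^ (j + a)) = 0 := by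
  have e1 : x ^ (l + b - 1) = x ^ (l - 1) * (x ^ (b - 1) * x) := by
    rw [← pow_succ, ← pow_add]; congr 1; omega
  have e2 : x ^ l = x ^ (l - 1) * x := by rw [← pow_succ]; congr 1; omega
  have e3 : y ^ (j + a - 1) = y ^ j * y ^ (a - 1) := by rw [← pow_add]; congr 1; omega
  have e4 : y ^ (j + a) = y ^ j * (y ^ (a - 1) * y) := by
    rw [← pow_succ, ← pow_add]; congr 1; omega
  have e5 : x ^ b = x ^ (b - 1) * x := by rw [← pow_succ]; congr 1; omega
  have e6 : y ^ a = y ^ (a - 1) * y := by rw [← pow_succ]; congr 1; omega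
  have hdrel : (a : ℕ) • (y ^ (a - 1) • D K B y) + (b : ℕ) • (x ^ (b - 1) • D K B x) = 0 := by
    have h0 := congrArg (D K B) hxy
    simp only [map_add, Derivation.map_algebraMap, map_zero, add_zero,
      Derivation.leibniz_pow] at h0
    exact h0
  have hD : D K B (x ^ l * y ^ (j + a))
      = (x ^ l) • ((j + a) • (y ^ (j + a - 1) • D K B y))
        + (y ^ (j + a)) • (l • (x ^ (l - 1) • D K B x)) := by
    rw [Derivation.leibniz]
    rw [Derivation.leibniz_pow, Derivation.leibniz_pow]
  have hYrel : y ^ j * (y ^ (a - 1) * y)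
      = y ^ j * (-(x ^ (b - 1) * x) - algebraMap K B α) := by
    rw [e5, e6] at hxy
    linear_combination y ^ j * hxy
  rw [hD, e1, e2, e3, e4, hYrel]
  linear_combination (norm := module)
    (((j + a : ℕ) : B) * (x ^ (l - 1) * x * y ^ j)) • hdrel

open KaehlerDifferential in
lemma step10 (K : Type) [Field K] [CharZero K] (B : Type) [CommRing B] [Algebra K B]
    (a b : ℕ) (ha : 1 ≤ a) (hb : 1 ≤ b) (α : K) (x y : B)
    (hxy : y ^ a + x ^ b + algebraMap K B α = 0)
    (j l : ℕ) (hl : 1 ≤ l) :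
    (x ^ (l + b - 1) * y ^ j
        - algebraMap K B (-(((l * a : ℕ) : K) * α) / (((l * a + j * b + a * b : ℕ)) : K))
          * (x ^ (l - 1) * y ^ j)) • D K B x
      = D K B (algebraMap K B (-((a : ℕ) : K) / (((l * a + j * b + a * b : ℕ)) : K))
          * (x ^ l * y ^ (j + a))) := by
  have hden : (((l * a + j * b + a * b : ℕ)) : K) ≠ 0 :=
    Nat.cast_ne_zero.mpr (by have := Nat.mul_pos ha hb; omega)
  have key := stepID K B a b ha hb α x y hxy j l hl
  set A := (x ^ (l + b - 1) * y ^ j) • D K B x with hA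
  set A' := (x ^ (l - 1) * y ^ j) • D K B x with hA'
  set DV := D K B (x ^ l * y ^ (j + a)) with hDV
  have h1 : ((a : ℕ) : K) • DV
      = -((((l * a + j * b + a * b : ℕ) : K)) • A) - ((((l * a : ℕ) : K) * α) • A') := by
    linear_combination (norm := module) key
  conv_rhs => rw [← Algebra.smul_def, Derivation.map_smul]
  rw [sub_smul, ← Algebra.smul_def, smul_assoc]
  rw [show (-(((l * a : ℕ) : K) * α) / (((l * a + j * b + a * b : ℕ)) : K))
      = -((1 / (((l * a + j * b + a * b : ℕ)) : K)) * (((l * a : ℕ) : K) * α)) by ring]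
  calc A - (-((1 / (((l * a + j * b + a * b : ℕ)) : K)) * (((l * a : ℕ) : K) * α))) • A'
      = ((1 / (((l * a + j * b + a * b : ℕ)) : K)) * (((l * a + j * b + a * b : ℕ)) : K)) • A
        + ((1 / (((l * a + j * b + a * b : ℕ)) : K)) * ((((l * a : ℕ) : K) * α))) • A' := by
        rw [one_div_mul_cancel hden, one_smul]
        module
    _ = (-(1 / (((l * a + j * b + a * b : ℕ)) : K))) • (((a : ℕ) : K) • DV) := by
        rw [h1]; module
    _ = (-((a : ℕ) : K) / (((l * a + j * b + a * b : ℕ)) : K)) • DV := by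
        rw [smul_smul]; congr 1; ring

open KaehlerDifferential in
lemma iter11 (K : Type) [Field K] [CharZero K] (B : Type) [CommRing B] [Algebra K B]
    (a b : ℕ) (ha : 1 ≤ a) (hb : 1 ≤ b) (α : K) (x y : B)
    (hxy : y ^ a + x ^ b + algebraMap K B α = 0)
    (j r : ℕ) (hr1 : 1 ≤ r) (M : ℕ) : ∃ g : B,
      (x ^ ((M + 1) * b + (r - 1)) * y ^ j
        - algebraMap K B (∏ n ∈ Finset.range (M + 1),
              (-((((n * b + r) * a : ℕ) : K) * α)
                / ((((n * b + r) * a + j * b + a * b : ℕ)) : K)))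
          * (x ^ (r - 1) * y ^ j)) • D K B x
      = D K B g := by
  induction M with
  | zero =>
    have h := step10 K B a b ha hb α x y hxy j (0 * b + r) (by omega)
    rw [show (0 * b + r) + b - 1 = (0 + 1) * b + (r - 1) by omega,
      show (0 * b + r) - 1 = r - 1 by omega] at h
    rw [Finset.prod_range_one]
    exact ⟨_, h⟩
  | succ M ih =>
    obtain ⟨g0, h0⟩ := ih
    have h1 := step10 K B a b ha hb α x y hxy j ((M + 1) * b + r) (by omega)
    rw [show ((M + 1) * b + r) + b - 1 = (M + 1 + 1) * b + (r - 1) by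
        have : (M + 1 + 1) * b = (M + 1) * b + b := by ring
        omega,
      show ((M + 1) * b + r) - 1 = (M + 1) * b + (r - 1) by omega] at h1
    refine ⟨algebraMap K B (-((a : ℕ) : K)
            / ((((M + 1) * b + r) * a + j * b + a * b : ℕ) : K))
          * (x ^ ((M + 1) * b + r) * y ^ (j + a))
        + algebraMap K B (-(((((M + 1) * b + r) * a : ℕ) : K) * α)
            / ((((M + 1) * b + r) * a + j * b + a * b : ℕ) : K)) * g0, ?_⟩
    rw [Finset.prod_range_succ, map_mul, Derivation.map_add]
    conv_rhs => rw [← Algebra.smul_def (-(((((M + 1) * b + r) * a : ℕ) : K) * α)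
      / ((((M + 1) * b + r) * a + j * b + a * b : ℕ) : K)) g0, Derivation.map_smul]
    linear_combination (norm := module) h1
      + (-(((((M + 1) * b + r) * a : ℕ) : K) * α)
          / ((((M + 1) * b + r) * a + j * b + a * b : ℕ) : K)) • h0



open MvPolynomial in
/-- equality (11) in the proof of Theorem 3.1, obtained by iterating
equality (10): on the superelliptic curve `y^a + x^b + α = 0`,
`x^{(N+1)b+(r−1)} y^j dx − (∏_{n=0}^{N} −(nb+r)aα/((nb+r)a+jb+ab)) x^{r−1} y^j dx`
is exact. -/
theorem stmt11 (K : Type) [Field K] [CharZero K]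
    (a b : ℕ) (ha : 2 ≤ a) (hb : 2 ≤ b) (hab : Nat.Coprime a b) (α : K)
    (f : MvPolynomial (Fin 2) K) (hf : f = X 1 ^ a + X 0 ^ b + C α)
    (N j r : ℕ) (hj1 : 1 ≤ j) (hj2 : j ≤ a - 1) (hr1 : 1 ≤ r) (hr2 : r ≤ b - 1) :
    ((Ideal.Quotient.mk (Ideal.span {f})) (X 0 ^ ((N + 1) * b + (r - 1)) * X 1 ^ j)
      - (Ideal.Quotient.mk (Ideal.span {f}))
          (C (∏ n ∈ Finset.range (N + 1),
                (-((((n * b + r) * a : ℕ) : K) * α)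
                  / ((((n * b + r) * a + j * b + a * b : ℕ)) : K)))
            * (X 0 ^ (r - 1) * X 1 ^ j))) •
      (KaehlerDifferential.D K (MvPolynomial (Fin 2) K ⧸ Ideal.span {f}))
        ((Ideal.Quotient.mk (Ideal.span {f})) (X 0))
      ∈ Set.range (KaehlerDifferential.D K (MvPolynomial (Fin 2) K ⧸ Ideal.span {f})) := by
  have hCmk : ∀ c : K, (Ideal.Quotient.mk (Ideal.span {f})) (MvPolynomial.C c)
      = algebraMap K (MvPolynomial (Fin 2) K ⧸ Ideal.span {f}) c := by
    intro c
    rw [← MvPolynomial.algebraMap_eq, ← Ideal.Quotient.algebraMap_eq,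
      ← IsScalarTower.algebraMap_apply]
  have hxy : ((Ideal.Quotient.mk (Ideal.span {f})) (X 1)) ^ a
      + ((Ideal.Quotient.mk (Ideal.span {f})) (X 0)) ^ b
      + algebraMap K (MvPolynomial (Fin 2) K ⧸ Ideal.span {f}) α = 0 := by
    have h0 : (Ideal.Quotient.mk (Ideal.span {f})) (X 1 ^ a + X 0 ^ b + C α) = 0 := by
      rw [← hf]
      exact Ideal.Quotient.eq_zero_iff_mem.mpr (Ideal.subset_span rfl)
    rw [map_add, map_add, map_pow, map_pow, hCmk] at h0
    exact h0
  obtain ⟨g, hg⟩ := iter11 K (MvPolynomial (Fin 2) K ⧸ Ideal.span {f}) a b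
    (by omega) (by omega) α ((Ideal.Quotient.mk (Ideal.span {f})) (X 0))
    ((Ideal.Quotient.mk (Ideal.span {f})) (X 1)) hxy j r hr1 N
  rw [show ((Ideal.Quotient.mk (Ideal.span {f})) (X 0 ^ ((N + 1) * b + (r - 1)) * X 1 ^ j))
      = ((Ideal.Quotient.mk (Ideal.span {f})) (X 0)) ^ ((N + 1) * b + (r - 1))
        * ((Ideal.Quotient.mk (Ideal.span {f})) (X 1)) ^ j from by
        rw [map_mul, map_pow, map_pow],
    show (Ideal.Quotient.mk (Ideal.span {f})) (C (∏ n ∈ Finset.range (N + 1),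
          (-((((n * b + r) * a : ℕ) : K) * α)
            / ((((n * b + r) * a + j * b + a * b : ℕ)) : K)))
        * (X 0 ^ (r - 1) * X 1 ^ j))
      = algebraMap K (MvPolynomial (Fin 2) K ⧸ Ideal.span {f})
          (∏ n ∈ Finset.range (N + 1),
            (-((((n * b + r) * a : ℕ) : K) * α)
              / ((((n * b + r) * a + j * b + a * b : ℕ)) : K)))
        * (((Ideal.Quotient.mk (Ideal.span {f})) (X 0)) ^ (r - 1)
            * ((Ideal.Quotient.mk (Ideal.span {f})) (X 1)) ^ j) from by
        rw [map_mul, map_mul, map_pow, map_pow, hCmk]]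
  exact ⟨g, hg.symm⟩
end

section
/- Let K be a field of characteristic 0, let a, b be coprime integers with a, b ≥ 2, and let f = y^a + Σ_{k=1}^{a−1} f_k(x)·y^k + f_0(x) ∈ K[x,y] with f_k(x) ∈ K[x], deg f_0 = b, and a·deg f_k + b·k < a·b for every 1 ≤ k ≤ a−1 with f_k ≠ 0. Set B := K[x,y]/(f), let Ω := Ω_{B/K} be the module of Kähler differentials with universal derivation d : B → Ω, and let H := Ω / d(B) be the quotient of Ω by the K-subspace d(B). Then the classes [x^i·y^j·dx] for i ∈ ℕ and 1 ≤ j ≤ a−1 span H as a K-vector space. -/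
set_option maxHeartbeats 3000000
set_option synthInstance.maxHeartbeats 400000
set_option linter.unnecessarySimpa false

open MvPolynomial in
/-- Steps 1–2 of the proof of Proposition 2.4 (Denef–Vercauteren): the
classes `[x^i y^j dx]` for `i ∈ ℕ`, `1 ≤ j ≤ a−1` span `H = Ω_{B/K}/d(B)` over `K`. -/
theorem stmt12 (K : Type) [Field K] [CharZero K]
    (a b : ℕ) (ha : 2 ≤ a) (hb : 2 ≤ b) (hab : Nat.Coprime a b)
    (f₀ : Polynomial K) (fc : ℕ → Polynomial K)
    (hdeg0 : f₀.natDegree = b)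
    (hdegk : ∀ k, 1 ≤ k → k ≤ a - 1 → fc k ≠ 0 →
      a * (fc k).natDegree + b * k < a * b)
    (f : MvPolynomial (Fin 2) K)
    (hf : f = X 1 ^ a
      + (∑ k ∈ Finset.Icc 1 (a - 1), Polynomial.aeval (X 0) (fc k) * X 1 ^ k)
      + Polynomial.aeval (X 0) f₀) :
    Submodule.span K
      {w : Ω[(MvPolynomial (Fin 2) K ⧸ Ideal.span {f})⁄K] ⧸
          LinearMap.range
            (KaehlerDifferential.D K
              (MvPolynomial (Fin 2) K ⧸ Ideal.span {f})).toLinearMap |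
        ∃ i j : ℕ, 1 ≤ j ∧ j ≤ a - 1 ∧
          w = Submodule.Quotient.mk
            ((Ideal.Quotient.mk (Ideal.span {f}) (X 0 ^ i * X 1 ^ j)) •
              (KaehlerDifferential.D K (MvPolynomial (Fin 2) K ⧸ Ideal.span {f}))
                (Ideal.Quotient.mk (Ideal.span {f}) (X 0)))} = ⊤ := by
  set B := MvPolynomial (Fin 2) K ⧸ Ideal.span {f} with hB
  set x : B := Ideal.Quotient.mk (Ideal.span {f}) (X 0) with hx
  set y : B := Ideal.Quotient.mk (Ideal.span {f}) (X 1) with hy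
  set d := KaehlerDifferential.D K B with hd
  set N : Submodule K (Ω[B⁄K]) := LinearMap.range d.toLinearMap with hN
  set π : Ω[B⁄K] →ₗ[K] (Ω[B⁄K] ⧸ N) := N.mkQ with hπ
  set Lx : B →ₗ[K] (Ω[B⁄K] ⧸ N) :=
    π ∘ₗ ((LinearMap.toSpanSingleton B (Ω[B⁄K]) (d x)).restrictScalars K) with hLx
  set Ly : B →ₗ[K] (Ω[B⁄K] ⧸ N) :=
    π ∘ₗ ((LinearMap.toSpanSingleton B (Ω[B⁄K]) (d y)).restrictScalars K) with hLy
  have hLx' : ∀ g : B, Lx g = π (g • d x) := fun g => rfl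
  have hLy' : ∀ g : B, Ly g = π (g • d y) := fun g => rfl
  set T : Submodule K (Ω[B⁄K] ⧸ N) := Submodule.span K
      {w | ∃ i j : ℕ, 1 ≤ j ∧ j ≤ a - 1 ∧
          w = Submodule.Quotient.mk
            ((Ideal.Quotient.mk (Ideal.span {f}) (X 0 ^ i * X 1 ^ j)) • d x)} with hT
  -- the generators, as values of Lx
  have hgen : ∀ i j : ℕ, 1 ≤ j → j ≤ a - 1 → Lx (x ^ i * y ^ j) ∈ T := by
    intro i j h1 h2
    refine Submodule.subset_span ⟨i, j, h1, h2, ?_⟩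
    rw [hLx', map_mul, map_pow, map_pow]
    rfl
  -- d of anything dies in the quotient
  have hDzero : ∀ g : B, π (d g) = 0 := by
    intro g
    rw [hπ, Submodule.mkQ_apply, Submodule.Quotient.mk_eq_zero]
    exact ⟨g, rfl⟩
  have hswap : ∀ (u v : B) (n : ℕ) (ω : Ω[B⁄K]), u • (n • v • ω) = n • ((u * v) • ω) := by
    intro u v n ω
    have h := map_nsmul (DistribMulAction.toAddMonoidHom (Ω[B⁄K]) u) n (v • ω)
    simp only [DistribMulAction.toAddMonoidHom_apply] at h
    rw [h]
    exact congrArg (fun z : Ω[B⁄K] => n • z) (mul_smul u v ω).symm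
  -- key Leibniz computation
  have hkey : ∀ i j : ℕ,
      ((i : K) + 1) • Lx (x ^ i * y ^ (j + 1))
        + ((j : K) + 1) • Ly (x ^ (i + 1) * y ^ j) = 0 := by
    intro i j
    have h0 := hDzero (x ^ (i + 1) * y ^ (j + 1))
    rw [Derivation.leibniz, Derivation.leibniz_pow, Derivation.leibniz_pow] at h0
    simp only [Nat.add_sub_cancel] at h0
    rw [hswap, hswap, mul_comm (y ^ (j + 1)) (x ^ i), map_add, map_nsmul, map_nsmul] at h0
    rw [hLx', hLy',
      show ((i : K) + 1) = ((i + 1 : ℕ) : K) by push_cast; ring,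
      show ((j : K) + 1) = ((j + 1 : ℕ) : K) by push_cast; ring,
      Nat.cast_smul_eq_nsmul, Nat.cast_smul_eq_nsmul]
    rw [add_comm]
    exact h0
  have hkey0 : ∀ i : ℕ, Lx (x ^ i * y ^ 0) = 0 := by
    intro i
    have h0 := hDzero (x ^ (i + 1))
    rw [Derivation.leibniz_pow] at h0
    simp only [Nat.add_sub_cancel] at h0
    rw [map_nsmul] at h0
    have h1 : ((i + 1 : ℕ) : K) • π (x ^ i • d x) = 0 := by
      rw [Nat.cast_smul_eq_nsmul]; exact h0
    have h2 : π (x ^ i • d x) = 0 := by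
      have hne : ((i + 1 : ℕ) : K) ≠ 0 := Nat.cast_ne_zero.mpr (Nat.succ_ne_zero i)
      exact (smul_eq_zero.mp h1).resolve_left hne
    rw [pow_zero, mul_one, hLx']
    exact h2
  have hkeyy : ∀ j : ℕ, Ly (x ^ 0 * y ^ j) = 0 := by
    intro j
    have h0 := hDzero (y ^ (j + 1))
    rw [Derivation.leibniz_pow] at h0
    simp only [Nat.add_sub_cancel] at h0
    rw [map_nsmul] at h0
    have h1 : ((j + 1 : ℕ) : K) • π (y ^ j • d y) = 0 := by
      rw [Nat.cast_smul_eq_nsmul]; exact h0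
    have h2 : π (y ^ j • d y) = 0 := by
      have hne : ((j + 1 : ℕ) : K) ≠ 0 := Nat.cast_ne_zero.mpr (Nat.succ_ne_zero j)
      exact (smul_eq_zero.mp h1).resolve_left hne
    rw [pow_zero, one_mul, hLy']
    exact h2
  -- reduction of y^a
  have hmk : ∀ p : Polynomial K,
      (Ideal.Quotient.mk (Ideal.span {f}) (Polynomial.aeval (X 0) p) : B)
        = Polynomial.aeval x p := by
    intro p
    exact (Polynomial.aeval_algHom_apply (Ideal.Quotient.mkₐ K (Ideal.span {f})) (X 0) p).symm
  have hya : y ^ a = -(∑ k ∈ Finset.Icc 1 (a - 1),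
      Polynomial.aeval x (fc k) * y ^ k) - Polynomial.aeval x f₀ := by
    have hf0 : (Ideal.Quotient.mk (Ideal.span {f})
        (X 1 ^ a + (∑ k ∈ Finset.Icc 1 (a - 1),
          Polynomial.aeval (X 0) (fc k) * X 1 ^ k) + Polynomial.aeval (X 0) f₀) : B) = 0 := by
      rw [← hf]
      exact Ideal.Quotient.eq_zero_iff_mem.mpr (Ideal.subset_span rfl)
    rw [map_add, map_add, map_sum, map_pow, hmk] at hf0
    have hterm : ∀ k ∈ Finset.Icc 1 (a - 1),
        (Ideal.Quotient.mk (Ideal.span {f})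
            (Polynomial.aeval (X 0) (fc k) * X 1 ^ k) : B)
          = Polynomial.aeval x (fc k) * y ^ k := by
      intro k _
      rw [map_mul, map_pow, hmk]
    rw [Finset.sum_congr rfl hterm] at hf0
    linear_combination hf0
  -- polynomial sublemma
  have hpoly : ∀ j' : ℕ, (∀ i : ℕ, Lx (x ^ i * y ^ j') ∈ T) →
      ∀ (p : Polynomial K) (i : ℕ),
        Lx (Polynomial.aeval x p * (x ^ i * y ^ j')) ∈ T := by
    intro j' h p
    induction p using Polynomial.induction_on' with
    | add p q hp hq =>
        intro i
        rw [map_add, add_mul, map_add]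
        exact Submodule.add_mem _ (hp i) (hq i)
    | monomial n r =>
        intro i
        have heq : Polynomial.aeval x (Polynomial.monomial n r) * (x ^ i * y ^ j')
            = algebraMap K B r * (x ^ (n + i) * y ^ j') := by
          rw [Polynomial.aeval_monomial, pow_add]
          ring
        rw [heq, ← Algebra.smul_def, map_smul]
        exact Submodule.smul_mem _ _ (h (n + i))
  -- main claim
  have main : ∀ j : ℕ, ∀ i : ℕ, Lx (x ^ i * y ^ j) ∈ T := by
    intro j
    induction j using Nat.strong_induction_on with
    | _ j IH =>
      intro i
      rcases Nat.lt_or_ge j a with hja | hja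
      · rcases Nat.eq_zero_or_pos j with rfl | hj1
        · rw [hkey0]
          exact T.zero_mem
        · exact hgen i j hj1 (by omega)
      · obtain ⟨m, rfl⟩ : ∃ m, j = m + a := ⟨j - a, by omega⟩
        have hxy : x ^ i * y ^ (m + a)
            = -(∑ k ∈ Finset.Icc 1 (a - 1),
                Polynomial.aeval x (fc k) * (x ^ i * y ^ (m + k)))
              - Polynomial.aeval x f₀ * (x ^ i * y ^ m) := by
          have h1 : x ^ i * y ^ (m + a) = (x ^ i * y ^ m) * y ^ a := by
            rw [pow_add]; ring
          have h2 : ∀ k ∈ Finset.Icc 1 (a - 1),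
              (x ^ i * y ^ m) * (Polynomial.aeval x (fc k) * y ^ k)
                = Polynomial.aeval x (fc k) * (x ^ i * y ^ (m + k)) := by
            intro k _
            rw [pow_add]; ring
          calc x ^ i * y ^ (m + a) = (x ^ i * y ^ m) * y ^ a := h1
            _ = -((x ^ i * y ^ m) * ∑ k ∈ Finset.Icc 1 (a - 1),
                  Polynomial.aeval x (fc k) * y ^ k)
                - Polynomial.aeval x f₀ * (x ^ i * y ^ m) := by
                rw [hya]; ring
            _ = -(∑ k ∈ Finset.Icc 1 (a - 1),
                  Polynomial.aeval x (fc k) * (x ^ i * y ^ (m + k)))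
                - Polynomial.aeval x f₀ * (x ^ i * y ^ m) := by
                rw [Finset.mul_sum, Finset.sum_congr rfl h2]
        rw [hxy, map_sub, map_neg, map_sum]
        refine Submodule.sub_mem _ (Submodule.neg_mem _ (Submodule.sum_mem _ ?_)) ?_
        · intro k hk
          have hk' := Finset.mem_Icc.mp hk
          exact hpoly (m + k) (fun i' => IH (m + k) (by omega) i') (fc k) i
        · exact hpoly m (fun i' => IH m (by omega) i') f₀ i
  have mainy : ∀ i j : ℕ, Ly (x ^ i * y ^ j) ∈ T := by
    intro i j
    rcases Nat.eq_zero_or_pos i with rfl | hi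
    · rw [hkeyy]
      exact T.zero_mem
    · obtain ⟨i', rfl⟩ : ∃ i'', i = i'' + 1 := ⟨i - 1, by omega⟩
      have h1 : ((j : K) + 1) • Ly (x ^ (i' + 1) * y ^ j)
          = -(((i' : K) + 1) • Lx (x ^ i' * y ^ (j + 1))) :=
        eq_neg_of_add_eq_zero_right (hkey i' j)
      have hne : ((j : K) + 1) ≠ 0 := by
        have := Nat.cast_add_one_ne_zero (R := K) j
        exact_mod_cast this
      have h2 : Ly (x ^ (i' + 1) * y ^ j)
          = ((j : K) + 1)⁻¹ • (-(((i' : K) + 1) • Lx (x ^ i' * y ^ (j + 1)))) := by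
        rw [← h1, inv_smul_smul₀ hne]
      rw [h2]
      exact Submodule.smul_mem _ _
        (Submodule.neg_mem _ (Submodule.smul_mem _ _ (main (j + 1) i')))
  -- monomials span B over K
  set M : Set B := {g | ∃ i j : ℕ, g = x ^ i * y ^ j} with hMdef
  have hmulx : ∀ g ∈ Submodule.span K M, x * g ∈ Submodule.span K M := by
    intro g hg
    induction hg using Submodule.span_induction with
    | mem g hg =>
        obtain ⟨i, j, rfl⟩ := hg
        exact Submodule.subset_span ⟨i + 1, j, by ring⟩
    | zero => simpa using Submodule.zero_mem _
    | add u v _ _ hu hv => rw [mul_add]; exact Submodule.add_mem _ hu hv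
    | smul r u _ hu => rw [mul_smul_comm]; exact Submodule.smul_mem _ _ hu
  have hmuly : ∀ g ∈ Submodule.span K M, y * g ∈ Submodule.span K M := by
    intro g hg
    induction hg using Submodule.span_induction with
    | mem g hg =>
        obtain ⟨i, j, rfl⟩ := hg
        exact Submodule.subset_span ⟨i, j + 1, by ring⟩
    | zero => simpa using Submodule.zero_mem _
    | add u v _ _ hu hv => rw [mul_add]; exact Submodule.add_mem _ hu hv
    | smul r u _ hu => rw [mul_smul_comm]; exact Submodule.smul_mem _ _ hu
  have hM : ∀ g : B, g ∈ Submodule.span K M := by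
    intro g
    obtain ⟨p, rfl⟩ := Ideal.Quotient.mk_surjective (I := Ideal.span {f}) g
    induction p using MvPolynomial.induction_on with
    | C r =>
        have h1 : (Ideal.Quotient.mk (Ideal.span {f}) (C r) : B) = r • (x ^ 0 * y ^ 0) := by
          rw [← MvPolynomial.algebraMap_eq, Ideal.Quotient.mk_algebraMap,
            Algebra.algebraMap_eq_smul_one]
          simp
        rw [h1]
        exact Submodule.smul_mem _ _ (Submodule.subset_span ⟨0, 0, rfl⟩)
    | add p q hp hq =>
        rw [map_add]
        exact Submodule.add_mem _ hp hq
    | mul_X p i hp =>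
        rw [map_mul, mul_comm]
        fin_cases i
        · exact hmulx _ hp
        · exact hmuly _ hp
  -- Lx and Ly land in T on all of B
  have hLxT : ∀ g : B, Lx g ∈ T := by
    intro g
    have hg := hM g
    induction hg using Submodule.span_induction with
    | mem g hg =>
        obtain ⟨i, j, rfl⟩ := hg
        exact main j i
    | zero => rw [map_zero]; exact T.zero_mem
    | add u v _ _ hu hv => rw [map_add]; exact Submodule.add_mem _ hu hv
    | smul r u _ hu => rw [map_smul]; exact Submodule.smul_mem _ _ hu
  have hLyT : ∀ g : B, Ly g ∈ T := by
    intro g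
    have hg := hM g
    induction hg using Submodule.span_induction with
    | mem g hg =>
        obtain ⟨i, j, rfl⟩ := hg
        exact mainy i j
    | zero => rw [map_zero]; exact T.zero_mem
    | add u v _ _ hu hv => rw [map_add]; exact Submodule.add_mem _ hu hv
    | smul r u _ hu => rw [map_smul]; exact Submodule.smul_mem _ _ hu
  -- D g is in the B-span of d x, d y
  have hspan : ∀ g : B, d g ∈ Submodule.span B {d x, d y} := by
    intro g
    obtain ⟨p, rfl⟩ := Ideal.Quotient.mk_surjective (I := Ideal.span {f}) g
    induction p using MvPolynomial.induction_on with
    | C r =>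
        rw [show (Ideal.Quotient.mk (Ideal.span {f}) (C r) : B) = algebraMap K B r by
          rw [← MvPolynomial.algebraMap_eq, Ideal.Quotient.mk_algebraMap]]
        simp
    | add p q hp hq =>
        rw [map_add, map_add]
        exact Submodule.add_mem _ hp hq
    | mul_X p i hp =>
        rw [map_mul, Derivation.leibniz]
        refine Submodule.add_mem _ (Submodule.smul_mem _ _ ?_) (Submodule.smul_mem _ _ hp)
        fin_cases i
        · exact Submodule.subset_span (Or.inl rfl)
        · exact Submodule.subset_span (Or.inr rfl)
  -- assembly
  rw [eq_top_iff]
  rintro w -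
  obtain ⟨ω, rfl⟩ := N.mkQ_surjective w
  have hωs : ω ∈ Submodule.span B {d x, d y} := by
    have h1 : (⊤ : Submodule B (Ω[B⁄K])) ≤ Submodule.span B {d x, d y} := by
      rw [← KaehlerDifferential.span_range_derivation (R := K) (S := B), Submodule.span_le]
      rintro _ ⟨g, rfl⟩
      exact hspan g
    exact h1 trivial
  obtain ⟨b1, b2, h12⟩ := Submodule.mem_span_pair.mp hωs
  have h13 : N.mkQ ω = Lx b1 + Ly b2 := by
    rw [← h12, map_add]
    rfl
  rw [h13]
  exact Submodule.add_mem _ (hLxT b1) (hLyT b2)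
end
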